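/- arXiv:2502.18686 — 6 statements merged into one kernel-verified Lean document; each statement's English description precedes it below -/
import Mathlib

section
/- Let n ≥ 1 and let a : Fin n → Fin n → Fin n → Fin n → ℝ be a tensor with the elastic symmetries a_{ijkl} = a_{jikl} = a_{ijlk} = a_{klij}. Suppose that for every unit vector v ∈ ℝⁿ and every q ∈ ℝⁿ with either q parallel to v or q ⊥ v, we have ∑_{i,j,k,l} a_{ijkl} v_i q_j v_k q_l = 0. Then a = 0. -/
open scoped BigOperators

namespace NPKAux

variable {n : ℕ}

def S4 (g : Fin n → Fin n → Fin n → Fin n → ℝ) : ℝ :=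
  ∑ i, ∑ j, ∑ k, ∑ l, g i j k l

def TT (a : Fin n → Fin n → Fin n → Fin n → ℝ) (x q y r : Fin n → ℝ) : ℝ :=
  S4 (fun i j k l => a i j k l * x i * q j * y k * r l)

lemma S4_congr (g h : Fin n → Fin n → Fin n → Fin n → ℝ)
    (H : ∀ i j k l, g i j k l = h i j k l) : S4 g = S4 h :=
  Finset.sum_congr rfl fun i _ => Finset.sum_congr rfl fun j _ =>
    Finset.sum_congr rfl fun k _ => Finset.sum_congr rfl fun l _ => H i j k l

lemma S4_add (g h : Fin n → Fin n → Fin n → Fin n → ℝ) :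
    S4 (fun i j k l => g i j k l + h i j k l) = S4 g + S4 h := by
  simp only [S4, Finset.sum_add_distrib]

lemma S4_mul (c : ℝ) (g : Fin n → Fin n → Fin n → Fin n → ℝ) :
    S4 (fun i j k l => c * g i j k l) = c * S4 g := by
  simp only [S4, Finset.mul_sum]

lemma S4_swap12 (g : Fin n → Fin n → Fin n → Fin n → ℝ) :
    S4 g = S4 (fun i j k l => g j i k l) := by
  unfold S4
  exact Finset.sum_comm

lemma S4_swap34 (g : Fin n → Fin n → Fin n → Fin n → ℝ) :
    S4 g = S4 (fun i j k l => g i j l k) := by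
  unfold S4
  exact Finset.sum_congr rfl fun i _ => Finset.sum_congr rfl fun j _ => Finset.sum_comm

lemma S4_swap_pairs (g : Fin n → Fin n → Fin n → Fin n → ℝ) :
    S4 g = S4 (fun i j k l => g k l i j) := by
  unfold S4
  calc ∑ i, ∑ j, ∑ k, ∑ l, g i j k l
      = ∑ i, ∑ k, ∑ j, ∑ l, g i j k l :=
        Finset.sum_congr rfl fun i _ => Finset.sum_comm
    _ = ∑ k, ∑ i, ∑ j, ∑ l, g i j k l := Finset.sum_comm
    _ = ∑ k, ∑ i, ∑ l, ∑ j, g i j k l :=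
        Finset.sum_congr rfl fun k _ => Finset.sum_congr rfl fun i _ => Finset.sum_comm
    _ = ∑ k, ∑ l, ∑ i, ∑ j, g i j k l :=
        Finset.sum_congr rfl fun k _ => Finset.sum_comm

variable (a : Fin n → Fin n → Fin n → Fin n → ℝ)

lemma Tadd1 (x x' q y r : Fin n → ℝ) :
    TT a (fun i => x i + x' i) q y r = TT a x q y r + TT a x' q y r := by
  simp only [TT]; rw [← S4_add]; exact S4_congr _ _ fun i j k l => by ring

lemma Tadd2 (x q q' y r : Fin n → ℝ) :
    TT a x (fun j => q j + q' j) y r = TT a x q y r + TT a x q' y r := by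
  simp only [TT]; rw [← S4_add]; exact S4_congr _ _ fun i j k l => by ring

lemma Tadd3 (x q y y' r : Fin n → ℝ) :
    TT a x q (fun k => y k + y' k) r = TT a x q y r + TT a x q y' r := by
  simp only [TT]; rw [← S4_add]; exact S4_congr _ _ fun i j k l => by ring

lemma Tadd4 (x q y r r' : Fin n → ℝ) :
    TT a x q y (fun l => r l + r' l) = TT a x q y r + TT a x q y r' := by
  simp only [TT]; rw [← S4_add]; exact S4_congr _ _ fun i j k l => by ring

lemma Tmul1 (c : ℝ) (x q y r : Fin n → ℝ) :
    TT a (fun i => c * x i) q y r = c * TT a x q y r := by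
  simp only [TT]; rw [← S4_mul]; exact S4_congr _ _ fun i j k l => by ring

lemma Tmul2 (c : ℝ) (x q y r : Fin n → ℝ) :
    TT a x (fun j => c * q j) y r = c * TT a x q y r := by
  simp only [TT]; rw [← S4_mul]; exact S4_congr _ _ fun i j k l => by ring

lemma Tmul3 (c : ℝ) (x q y r : Fin n → ℝ) :
    TT a x q (fun k => c * y k) r = c * TT a x q y r := by
  simp only [TT]; rw [← S4_mul]; exact S4_congr _ _ fun i j k l => by ring

lemma Tmul4 (c : ℝ) (x q y r : Fin n → ℝ) :
    TT a x q y (fun l => c * r l) = c * TT a x q y r := by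
  simp only [TT]; rw [← S4_mul]; exact S4_congr _ _ fun i j k l => by ring

lemma TTzero1 (v q y r : Fin n → ℝ) (hv : ∀ i, v i = 0) : TT a v q y r = 0 := by
  simp only [TT, S4]
  refine Finset.sum_eq_zero fun i _ => Finset.sum_eq_zero fun j _ =>
    Finset.sum_eq_zero fun k _ => Finset.sum_eq_zero fun l _ => ?_
  rw [hv i]; ring

end NPKAux

open NPKAux

/-- An elastic 2-tensor `a` on ℝⁿ (with symmetries
`a_{ijkl} = a_{jikl} = a_{ijlk} = a_{klij}`) that satisfies
`∑ a_{ijkl} v_i q_j v_k q_l = 0` for every unit vector `v` and every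
polarization `q ∈ ℝv ∪ v⊥` must vanish. -/
theorem no_pointwise_kernel_rank2 (n : ℕ) (hn : 1 ≤ n)
    (a : Fin n → Fin n → Fin n → Fin n → ℝ)
    (hsymm1 : ∀ i j k l, a i j k l = a j i k l)
    (hsymm2 : ∀ i j k l, a i j k l = a i j l k)
    (hsymm3 : ∀ i j k l, a i j k l = a k l i j)
    (h : ∀ v q : Fin n → ℝ, (∑ i, v i ^ 2) = 1 →
      ((∃ t : ℝ, q = t • v) ∨ (∑ i, q i * v i) = 0) →
      (∑ i, ∑ j, ∑ k, ∑ l, a i j k l * v i * q j * v k * q l) = 0) :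
    a = 0 := by
  -- symmetry lemmas for TT
  have hT1 : ∀ x q y r : Fin n → ℝ, TT a x q y r = TT a q x y r := by
    intro x q y r
    simp only [TT]
    rw [S4_swap12]
    exact S4_congr _ _ fun i j k l => by rw [hsymm1 j i k l]; ring
  have hT2 : ∀ x q y r : Fin n → ℝ, TT a x q y r = TT a x q r y := by
    intro x q y r
    simp only [TT]
    rw [S4_swap34]
    exact S4_congr _ _ fun i j k l => by rw [hsymm2 i j l k]; ring
  have hT3 : ∀ x q y r : Fin n → ℝ, TT a x q y r = TT a y r x q := by
    intro x q y r
    simp only [TT]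
    rw [S4_swap_pairs]
    exact S4_congr _ _ fun i j k l => by rw [hsymm3 k l i j]; ring
  -- Step 1: F(v,q) = 0 for any v and q parallel or perpendicular to v
  have Fzero : ∀ v q : Fin n → ℝ,
      ((∃ t : ℝ, ∀ i, q i = t * v i) ∨ (∑ i, q i * v i) = 0) →
      TT a v q v q = 0 := by
    intro v q hcond
    by_cases hvz : ∀ i, v i = 0
    · exact TTzero1 a v q v q hvz
    push_neg at hvz
    obtain ⟨i0, hi0⟩ := hvz
    have hS : 0 < ∑ i, v i ^ 2 :=
      Finset.sum_pos' (fun i _ => sq_nonneg _)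
        ⟨i0, Finset.mem_univ i0, pow_two_pos_of_ne_zero hi0⟩
    set s : ℝ := Real.sqrt (∑ i, v i ^ 2) with hs_def
    have hs : 0 < s := Real.sqrt_pos.mpr hS
    have hs0 : s ≠ 0 := ne_of_gt hs
    have hs2 : s ^ 2 = ∑ i, v i ^ 2 := Real.sq_sqrt hS.le
    set u : Fin n → ℝ := fun i => v i / s with hu_def
    have hu1 : (∑ i, u i ^ 2) = 1 := by
      simp only [hu_def, div_pow]
      rw [← Finset.sum_div, ← hs2, div_self (pow_ne_zero 2 hs0)]
    have hveq : v = fun i => s * u i := by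
      funext i
      simp only [hu_def]
      field_simp
    have hcond' : (∃ t : ℝ, q = t • u) ∨ (∑ i, q i * u i) = 0 := by
      rcases hcond with ⟨t0, ht0⟩ | hperp
      · left
        refine ⟨t0 * s, funext fun i => ?_⟩
        simp only [Pi.smul_apply, smul_eq_mul, hu_def]
        rw [ht0 i]
        field_simp
      · right
        simp only [hu_def, ← mul_div_assoc]
        rw [← Finset.sum_div, hperp, zero_div]
    have hmain : TT a u q u q = 0 := h u q hu1 hcond'
    rw [hveq, Tmul1, Tmul3, hmain]
    ring
  -- Step 2: F(x,x) = 0 for all x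
  have hz : ∀ x : Fin n → ℝ, TT a x x x x = 0 := fun x =>
    Fzero x x (Or.inl ⟨1, fun i => (one_mul (x i)).symm⟩)
  -- Step 3: T(v,v,v,w) = 0 for all v, w
  have key : ∀ v w : Fin n → ℝ, TT a v v v w = 0 := by
    intro v w
    have expand : ∀ t : ℝ,
        TT a (fun i => v i + t * w i) (fun i => v i + t * w i)
          (fun i => v i + t * w i) (fun i => v i + t * w i)
        = TT a v v v v + 4 * t * TT a v v v w
          + t ^ 2 * (2 * TT a v v w w + 4 * TT a v w v w)
          + 4 * t ^ 3 * TT a v w w w + t ^ 4 * TT a w w w w := by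
      intro t
      simp only [Tadd1, Tadd2, Tadd3, Tadd4, Tmul1, Tmul2, Tmul3, Tmul4]
      have hA1 : TT a w v v v = TT a v v v w := by
        rw [hT1 w v v v, hT3 v w v v]
      have hA2 : TT a v w v v = TT a v v v w := hT3 v w v v
      have hA3 : TT a v v w v = TT a v v v w := hT2 v v w v
      have hB1 : TT a w w w v = TT a v w w w := by
        rw [hT2 w w w v, hT3 w w v w]
      have hB2 : TT a w w v w = TT a v w w w := hT3 w w v w
      have hB3 : TT a w v w w = TT a v w w w := hT1 w v w w
      have hC1 : TT a w w v v = TT a v v w w := hT3 w w v v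
      have hC2 : TT a w v w v = TT a v w v w := by
        rw [hT1 w v w v, hT2 v w w v]
      have hC3 : TT a w v v w = TT a v w v w := hT1 w v v w
      have hC4 : TT a v w w v = TT a v w v w := hT2 v w w v
      rw [hA1, hA2, hA3, hB1, hB2, hB3, hC1, hC2, hC3, hC4]
      ring
    have e1 := (hz (fun i => v i + (1:ℝ) * w i)).symm.trans (expand 1)
    have e2 := (hz (fun i => v i + (-1:ℝ) * w i)).symm.trans (expand (-1))
    have e3 := (hz (fun i => v i + (2:ℝ) * w i)).symm.trans (expand 2)
    have hv0 := hz v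
    have hw0 := hz w
    nlinarith [e1, e2, e3, hv0, hw0]
  -- Step 4: F(v,q) = 0 for all v, q
  have Fall : ∀ v q : Fin n → ℝ, TT a v q v q = 0 := by
    intro v q
    by_cases hvz : ∀ i, v i = 0
    · exact TTzero1 a v q v q hvz
    push_neg at hvz
    obtain ⟨i0, hi0⟩ := hvz
    have hS : 0 < ∑ i, v i ^ 2 :=
      Finset.sum_pos' (fun i _ => sq_nonneg _)
        ⟨i0, Finset.mem_univ i0, pow_two_pos_of_ne_zero hi0⟩
    have hS0 : (∑ i, v i ^ 2) ≠ 0 := ne_of_gt hS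
    set t : ℝ := (∑ i, q i * v i) / (∑ i, v i ^ 2) with ht_def
    set w : Fin n → ℝ := fun j => q j - t * v j with hw_def
    have hq' : q = fun j => t * v j + w j := by
      funext j
      simp only [hw_def]
      ring
    have hperp : (∑ j, w j * v j) = 0 := by
      have e : (∑ j, w j * v j) = (∑ j, q j * v j) - t * (∑ j, v j ^ 2) := by
        rw [Finset.mul_sum, ← Finset.sum_sub_distrib]
        exact Finset.sum_congr rfl fun j _ => by simp only [hw_def]; ring
      have e2 : t * (∑ j, v j ^ 2) = ∑ j, q j * v j := by
        rw [ht_def]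
        exact div_mul_cancel₀ _ hS0
      rw [e, e2]
      ring
    have A1 : TT a v v v v = 0 := hz v
    have A2 : TT a v v v w = 0 := key v w
    have A3 : TT a v w v v = 0 := (hT3 v w v v).trans A2
    have A4 : TT a v w v w = 0 := Fzero v w (Or.inr hperp)
    rw [hq']
    simp only [Tadd2, Tadd4, Tmul2, Tmul4]
    rw [A1, A2, A3, A4]
    ring
  -- Step 5a: T(x,q,y,q) = 0
  have T5a : ∀ x y q : Fin n → ℝ, TT a x q y q = 0 := by
    intro x y q
    have h0 := Fall (fun i => x i + y i) q
    simp only [Tadd1, Tadd3] at h0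
    have e1 := Fall x q
    have e2 := Fall y q
    have e3 : TT a y q x q = TT a x q y q := hT3 y q x q
    linarith
  -- Step 5b: antisymmetry in slots 2,4
  have anti24 : ∀ x q y r : Fin n → ℝ, TT a x q y r + TT a x r y q = 0 := by
    intro x q y r
    have h0 := T5a x y (fun j => q j + r j)
    simp only [Tadd2, Tadd4] at h0
    have e1 := T5a x y q
    have e2 := T5a x y r
    linarith
  -- Step 5c: T(x,q,x,r) = 0
  have T5c : ∀ x q r : Fin n → ℝ, TT a x q x r = 0 := by
    intro x q r
    have h0 := anti24 x q x r
    have e : TT a x r x q = TT a x q x r := hT3 x r x q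
    linarith
  -- Step 5d: antisymmetry in slots 1,3
  have anti13 : ∀ x q y r : Fin n → ℝ, TT a x q y r + TT a y q x r = 0 := by
    intro x q y r
    have h0 := T5c (fun i => x i + y i) q r
    simp only [Tadd1, Tadd3] at h0
    have e1 := T5c x q r
    have e2 := T5c y q r
    linarith
  -- Step 5e: T = 0
  have final : ∀ x q y r : Fin n → ℝ, TT a x q y r = 0 := by
    intro x q y r
    have f1 : TT a x q y r = TT a q x y r := hT1 x q y r
    have f2 := anti13 q x y r
    have f3 : TT a y x q r = TT a x y q r := hT1 y x q r
    have f4 := anti24 x y q r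
    have f5 : TT a x r q y = TT a x r y q := hT2 x r q y
    have f6 := anti24 x r y q
    linarith
  -- Step 6: evaluate at delta vectors
  funext i j k l
  have hd : TT a (fun m => if m = i then (1:ℝ) else 0)
      (fun m => if m = j then (1:ℝ) else 0)
      (fun m => if m = k then (1:ℝ) else 0)
      (fun m => if m = l then (1:ℝ) else 0) = a i j k l := by
    simp [TT, S4, mul_ite, mul_one, mul_zero, ite_mul, zero_mul, one_mul,
      Finset.sum_ite_eq', Finset.mem_univ]
  have := (hd.symm).trans (final _ _ _ _)
  simpa using this
end

section
/- Let n ≥ 1 and fix a nonzero vector p ∈ ℝⁿ. Define μ_p : ℝⁿ → (ℝⁿ)⊗4 by (μ_p W)_{ijkl} = (1/4)(p_i W_j + p_j W_i) δ_{kl} + (1/4)(p_k W_l + p_l W_k) δ_{ij}, and define λ_p : (ℝⁿ)⊗4 → ℝⁿ by (λ_p T)_i = 4|p|⁻⁴ ∑_{β,λ,μ} T_{iβλμ} p_β p_λ p_μ. Then for every W ∈ ℝⁿ with ⟨W,p⟩ = 0, we have λ_p(μ_p W) = W. -/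
open scoped BigOperators

private lemma key_sum (n : ℕ)
    (p : Fin n → ℝ)
    (W : Fin n → ℝ) (hW : (∑ i, W i * p i) = 0)
    (i : Fin n) :
    (∑ β, ∑ l, ∑ m, ((1/4) * (p i * W β + p β * W i) * (if l = m then (1:ℝ) else 0)
      + (1/4) * (p l * W m + p m * W l) * (if i = β then (1:ℝ) else 0)) * p β * p l * p m)
      = (∑ m, p m ^ 2) ^ 2 * W i / 4 := by
  simp only [add_mul, Finset.sum_add_distrib, ite_mul, mul_ite, mul_zero, zero_mul,
    Finset.sum_ite_eq, Finset.sum_ite_eq', Finset.mem_univ, if_true, one_mul, mul_one]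
  have h2 : ∀ x : Fin n,
      (∑ x1 : Fin n, ∑ x2 : Fin n,
        if i = x then 1/4*(p x1*W x2 + p x2*W x1)*p x*p x1*p x2 else 0)
      = if i = x then ∑ x1, ∑ x2, 1/4*(p x1*W x2 + p x2*W x1)*p x*p x1*p x2 else 0 := by
    intro x; split <;> simp
  rw [Finset.sum_congr rfl fun x _ => h2 x, Finset.sum_ite_eq]
  simp only [Finset.mem_univ, if_true]
  have hA : (∑ x : Fin n, ∑ x1 : Fin n, 1/4*(p i*W x + p x*W i)*p x*p x1*p x1)
      = (∑ x, 1/4*(p i*W x + p x*W i)*p x) * (∑ x1, p x1^2) := by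
    rw [Finset.sum_mul_sum]
    exact Finset.sum_congr rfl fun x _ => Finset.sum_congr rfl fun x1 _ => by ring
  have hB : (∑ x1 : Fin n, ∑ x2 : Fin n, 1/4*(p x1*W x2 + p x2*W x1)*p i*p x1*p x2)
      = 1/4 * p i * ((∑ x, p x^2) * (∑ x, W x*p x) + (∑ x, W x*p x) * (∑ x, p x^2)) := by
    rw [Finset.sum_mul_sum, Finset.sum_mul_sum, mul_add, Finset.mul_sum, Finset.mul_sum,
      ← Finset.sum_add_distrib]
    refine Finset.sum_congr rfl fun x1 _ => ?_
    rw [Finset.mul_sum, Finset.mul_sum, ← Finset.sum_add_distrib]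
    exact Finset.sum_congr rfl fun x2 _ => by ring
  have hC : (∑ x, 1/4*(p i*W x + p x*W i)*p x)
      = 1/4*(p i*(∑ x, W x*p x) + W i*(∑ x, p x^2)) := by
    rw [Finset.sum_congr rfl fun x (_ : x ∈ Finset.univ) =>
      (by ring : 1/4*(p i*W x + p x*W i)*p x = 1/4*(p i*(W x*p x)) + 1/4*W i*p x^2),
      Finset.sum_add_distrib]
    simp only [← Finset.mul_sum]
    ring
  rw [hA, hB, hC, hW]
  ring

/-- With `(μ_p W)_{ijkl} = (1/4)(p_i W_j + p_j W_i) δ_{kl}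
+ (1/4)(p_k W_l + p_l W_k) δ_{ij}` and
`(λ_p T)_i = 4|p|⁻⁴ ∑ T_{iβλμ} p_β p_λ p_μ`, we have `λ_p (μ_p W) = W`
for every `W ⊥ p`. -/
theorem lambda_left_inverse_of_mu (n : ℕ) (hn : 1 ≤ n)
    (p : Fin n → ℝ) (hp : p ≠ 0)
    (W : Fin n → ℝ) (hW : (∑ i, W i * p i) = 0)
    (T : Fin n → Fin n → Fin n → Fin n → ℝ)
    (hT : T = fun i j k l =>
      (1/4) * (p i * W j + p j * W i) * (if k = l then (1:ℝ) else 0)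
      + (1/4) * (p k * W l + p l * W k) * (if i = j then (1:ℝ) else 0)) :
    ∀ i, 4 * ((∑ m, p m ^ 2) ^ 2)⁻¹ *
      (∑ β, ∑ l, ∑ m, T i β l m * p β * p l * p m) = W i := by
  intro i
  have hS : (∑ m, p m ^ 2) ≠ 0 := by
    obtain ⟨j, hj⟩ : ∃ j, p j ≠ 0 := by
      by_contra h; push_neg at h; exact hp (funext h)
    have : 0 < ∑ m, p m ^ 2 :=
      Finset.sum_pos' (fun m _ => sq_nonneg _) ⟨j, Finset.mem_univ j, by positivity⟩
    linarith
  subst hT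
  rw [key_sum n p W hW i]
  field_simp
end

section
/- Fix a nonzero p ∈ ℝⁿ. With the notation of the pointwise decomposition, the space E of elastic 2-tensors decomposes as an orthogonal direct sum E = A_p ⊕ B_p ⊕ C_p, where A_p = {μ_p W : W ∈ ℝⁿ, W ⊥ p}, B_p = {ι_p h : h ∈ Sym²(ℝⁿ)}, and C_p = {S ∈ E : μ_p* S = 0 and ι_p* S = 0}. Moreover A_p ⊕ B_p is orthogonal to C_p. -/
open scoped BigOperators

/-- Elastic symmetries of a 4-tensor. -/
def Elastic {n : ℕ} (T : Fin n → Fin n → Fin n → Fin n → ℝ) : Prop :=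
  (∀ i j k l, T i j k l = T j i k l) ∧ (∀ i j k l, T i j k l = T i j l k) ∧
    (∀ i j k l, T i j k l = T k l i j)

/-- The symbol `μ_p` of the operator `K`. -/
noncomputable def muP {n : ℕ} (p W : Fin n → ℝ) : Fin n → Fin n → Fin n → Fin n → ℝ :=
  fun i j k l =>
    (1/4) * (p i * W j + p j * W i) * (if k = l then (1:ℝ) else 0)
    + (1/4) * (p k * W l + p l * W k) * (if i = j then (1:ℝ) else 0)

/-- The symbol `ι_p` of the operator `H`. -/
noncomputable def iotaP {n : ℕ} (p : Fin n → ℝ) (h : Fin n → Fin n → ℝ) :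
    Fin n → Fin n → Fin n → Fin n → ℝ :=
  fun i j k l => (1/2) * (p i * p j * h k l + p k * p l * h i j)

/-- The dual symbol `μ_p*`. -/
noncomputable def muPStar {n : ℕ} (p : Fin n → ℝ)
    (T : Fin n → Fin n → Fin n → Fin n → ℝ) : Fin n → ℝ :=
  fun i => ∑ β, ∑ l, ∑ m, p β * (if l = m then (1:ℝ) else 0) * T i β l m

/-- The dual symbol `ι_p*`. -/
noncomputable def iotaPStar {n : ℕ} (p : Fin n → ℝ)
    (T : Fin n → Fin n → Fin n → Fin n → ℝ) : Fin n → Fin n → ℝ :=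
  fun i j => ∑ l, ∑ m, T i j l m * p l * p m

/-- Membership in `A_p = {μ_p W : W ⊥ p}`. -/
def MemA {n : ℕ} (p : Fin n → ℝ) (A : Fin n → Fin n → Fin n → Fin n → ℝ) : Prop :=
  ∃ W : Fin n → ℝ, (∑ i, W i * p i) = 0 ∧ A = muP p W

/-- Membership in `B_p = {ι_p h : h ∈ Sym²(ℝⁿ)}`. -/
def MemB {n : ℕ} (p : Fin n → ℝ) (B : Fin n → Fin n → Fin n → Fin n → ℝ) : Prop :=
  ∃ h : Fin n → Fin n → ℝ, (∀ i j, h i j = h j i) ∧ B = iotaP p h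

/-- Membership in `C_p = {S ∈ E : μ_p* S = 0, ι_p* S = 0}`. -/
def MemC {n : ℕ} (p : Fin n → ℝ) (C : Fin n → Fin n → Fin n → Fin n → ℝ) : Prop :=
  Elastic C ∧ muPStar p C = 0 ∧ iotaPStar p C = 0

/-- The Euclidean inner product of 4-tensors. -/
noncomputable def tdot {n : ℕ} (S T : Fin n → Fin n → Fin n → Fin n → ℝ) : ℝ :=
  ∑ i, ∑ j, ∑ k, ∑ l, S i j k l * T i j k l

section SumHelpers

lemma sum_sum_eq {n : ℕ} (c : ℝ) (f g : Fin n → ℝ) (A : Fin n → Fin n → ℝ)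
    (hA : ∀ x y, A x y = c * (f x * g y)) :
    ∑ x, ∑ y, A x y = c * ((∑ x, f x) * (∑ y, g y)) := by
  calc ∑ x, ∑ y, A x y = ∑ x, (c * f x) * ∑ y, g y :=
        Finset.sum_congr rfl fun x _ => by
          rw [Finset.mul_sum]; exact Finset.sum_congr rfl fun y _ => by rw [hA x y]; ring
    _ = _ := by rw [← Finset.sum_mul, ← Finset.mul_sum, mul_assoc]

lemma sum_sum_cmul {n : ℕ} (c : ℝ) (A B : Fin n → Fin n → ℝ)
    (hA : ∀ x y, A x y = c * B x y) :
    ∑ x, ∑ y, A x y = c * ∑ x, ∑ y, B x y := by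
  rw [Finset.mul_sum]
  exact Finset.sum_congr rfl fun x _ => by
    rw [Finset.mul_sum]; exact Finset.sum_congr rfl fun y _ => hA x y

lemma sum_cmul {n : ℕ} (c : ℝ) (f g : Fin n → ℝ) (hA : ∀ x, f x = c * g x) :
    ∑ x, f x = c * ∑ x, g x := by
  rw [Finset.mul_sum]; exact Finset.sum_congr rfl fun x _ => hA x

lemma sum3_rot {n : ℕ} (F : Fin n → Fin n → Fin n → ℝ) :
    ∑ i, ∑ j, ∑ k, F i j k = ∑ j, ∑ k, ∑ i, F i j k := by
  calc ∑ i, ∑ j, ∑ k, F i j k = ∑ j, ∑ i, ∑ k, F i j k := Finset.sum_comm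
    _ = ∑ j, ∑ k, ∑ i, F i j k := Finset.sum_congr rfl fun j _ => Finset.sum_comm

lemma sum4_swap {n : ℕ} (F : Fin n → Fin n → Fin n → Fin n → ℝ) :
    ∑ i, ∑ j, ∑ k, ∑ l, F i j k l = ∑ k, ∑ l, ∑ i, ∑ j, F i j k l := by
  calc ∑ i, ∑ j, ∑ k, ∑ l, F i j k l
      = ∑ i, ∑ k, ∑ j, ∑ l, F i j k l := Finset.sum_congr rfl fun i _ => Finset.sum_comm
    _ = ∑ k, ∑ i, ∑ j, ∑ l, F i j k l := Finset.sum_comm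
    _ = ∑ k, ∑ i, ∑ l, ∑ j, F i j k l :=
        Finset.sum_congr rfl fun k _ => Finset.sum_congr rfl fun i _ => Finset.sum_comm
    _ = ∑ k, ∑ l, ∑ i, ∑ j, F i j k l := Finset.sum_congr rfl fun k _ => Finset.sum_comm

end SumHelpers

section HLemmas
variable {n : ℕ} (p W : Fin n → ℝ) (h : Fin n → Fin n → ℝ)

lemma H1 (i : Fin n) : muPStar p (muP p W) i =
    (n/4:ℝ)*(p i * (∑ j, p j * W j)) + (n/4:ℝ)*((∑ j, p j * p j) * W i)
      + (1/2)*(∑ j, p j * W j)*p i := by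
  simp [muPStar, muP, mul_ite, ite_mul, mul_add, Finset.sum_add_distrib, Finset.mul_sum,
    Finset.sum_ite_eq, Finset.sum_ite_eq']
  simp only [Finset.mul_sum, Finset.sum_mul]
  simp only [← Finset.sum_add_distrib]
  exact Finset.sum_congr rfl (fun x _ => by ring)

lemma H2 {n : ℕ} (p W : Fin n → ℝ) (i j : Fin n) : iotaPStar p (muP p W) i j =
    ((∑ k, p k * p k)/4)*(p i * W j + p j * W i)
      + (1/2)*(∑ k, p k * W k)*(∑ k, p k * p k)*(if i = j then (1:ℝ) else 0) := by
  by_cases hij : i = j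
  · subst hij
    conv_lhs => simp [iotaPStar, muP, mul_ite, ite_mul, zero_mul, mul_add, add_mul,
      Finset.sum_add_distrib, Finset.sum_ite_eq, Finset.sum_ite_eq']
    rw [sum_cmul (4⁻¹ * (p i * W i)) (fun x => 4⁻¹ * (p i * W i) * p x * p x)
        (fun x => p x * p x) (fun x => by ring),
      sum_sum_eq 4⁻¹ (fun x => p x * p x) (fun y => p y * W y)
        (fun x y => 4⁻¹ * (p x * W y) * p x * p y) (fun x y => by ring),
      sum_sum_eq 4⁻¹ (fun x => p x * W x) (fun y => p y * p y)
        (fun x y => 4⁻¹ * (p y * W x) * p x * p y) (fun x y => by ring)]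
    simp only [eq_self_iff_true, if_true]
    ring
  · conv_lhs => simp [iotaPStar, muP, hij, mul_ite, ite_mul, zero_mul, mul_add, add_mul,
      Finset.sum_add_distrib, Finset.sum_ite_eq, Finset.sum_ite_eq']
    rw [sum_cmul (4⁻¹ * (p i * W j)) (fun x => 4⁻¹ * (p i * W j) * p x * p x)
        (fun x => p x * p x) (fun x => by ring),
      sum_cmul (4⁻¹ * (p j * W i)) (fun x => 4⁻¹ * (p j * W i) * p x * p x)
        (fun x => p x * p x) (fun x => by ring)]
    simp only [if_neg hij]
    ring

lemma H3 (i : Fin n) : muPStar p (iotaP p h) i =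
    (1/2)*((∑ k, p k * p k)*(∑ k, h k k)*p i + (∑ k, p k * p k)*(∑ j, h i j * p j)) := by
  conv_lhs => simp [muPStar, iotaP, mul_ite, ite_mul, mul_add, Finset.sum_add_distrib,
    Finset.mul_sum, Finset.sum_ite_eq, Finset.sum_ite_eq']
  rw [sum_sum_eq (2⁻¹ * p i) (fun x => p x * p x) (fun y => h y y) _
      (fun x y => by ring),
    sum_sum_eq 2⁻¹ (fun x => h i x * p x) (fun y => p y * p y) _
      (fun x y => by ring)]
  ring

lemma H4 (i j : Fin n) : iotaPStar p (iotaP p h) i j =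
    (1/2)*((∑ l, ∑ m, h l m * p l * p m)*(p i * p j) + (∑ k, p k * p k)^2 * h i j) := by
  conv_lhs => simp [iotaPStar, iotaP, mul_add, add_mul, Finset.sum_add_distrib]
  rw [sum_sum_cmul (2⁻¹ * (p i * p j)) (fun x y => 2⁻¹ * (p i * p j * h x y) * p x * p y)
      (fun x y => h x y * p x * p y) (fun x y => by ring),
    sum_sum_eq (2⁻¹ * h i j) (fun x => p x * p x) (fun y => p y * p y)
      (fun x y => 2⁻¹ * (p x * p y * h i j) * p x * p y) (fun x y => by ring)]
  ring

end HLemmas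

lemma muPStar_eq {n : ℕ} (p : Fin n → ℝ) (C : Fin n → Fin n → Fin n → Fin n → ℝ) (i : Fin n) :
    muPStar p C i = ∑ β, ∑ l, p β * C i β l l := by
  simp [muPStar, mul_ite, ite_mul, zero_mul, mul_zero, Finset.sum_ite_eq, Finset.sum_ite_eq']

lemma ortho_mu {n : ℕ} (p W : Fin n → ℝ) (C : Fin n → Fin n → Fin n → Fin n → ℝ)
    (hC : Elastic C) (hmu : ∀ i, muPStar p C i = 0) : tdot (muP p W) C = 0 := by
  obtain ⟨s1, _s2, s3⟩ := hC
  have hm : ∀ i, ∑ β, ∑ l, p β * C i β l l = 0 := fun i => by rw [← muPStar_eq]; exact hmu i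
  have T1 : ∑ x : Fin n, ∑ y, ∑ z, 4⁻¹ * (p x * W y) * C x y z z = 0 := by
    rw [show (∑ x : Fin n, ∑ y, ∑ z, 4⁻¹ * (p x * W y) * C x y z z)
        = ∑ x : Fin n, ∑ y, ∑ z, 4⁻¹ * (p x * W y) * C y x z z from
      Finset.sum_congr rfl fun x _ => Finset.sum_congr rfl fun y _ =>
        Finset.sum_congr rfl fun z _ => by rw [s1], Finset.sum_comm]
    refine Finset.sum_eq_zero fun y _ => ?_
    rw [sum_sum_cmul (4⁻¹ * W y) _ (fun x z => p x * C y x z z) (fun x z => by ring),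
      hm y, mul_zero]
  have T2 : ∑ x : Fin n, ∑ y, ∑ z, 4⁻¹ * (p y * W x) * C x y z z = 0 := by
    refine Finset.sum_eq_zero fun x _ => ?_
    rw [sum_sum_cmul (4⁻¹ * W x) _ (fun y z => p y * C x y z z) (fun y z => by ring),
      hm x, mul_zero]
  have T3 : ∑ x : Fin n, ∑ y, ∑ z, 4⁻¹ * (p y * W z) * C x x y z = 0 := by
    rw [show (∑ x : Fin n, ∑ y, ∑ z, 4⁻¹ * (p y * W z) * C x x y z)
        = ∑ x : Fin n, ∑ y, ∑ z, 4⁻¹ * (p y * W z) * C z y x x from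
      Finset.sum_congr rfl fun x _ => Finset.sum_congr rfl fun y _ =>
        Finset.sum_congr rfl fun z _ => by rw [s3, s1], sum3_rot, sum3_rot]
    refine Finset.sum_eq_zero fun z _ => ?_
    rw [sum_sum_cmul (4⁻¹ * W z) _ (fun x y => p y * C z y x x) (fun x y => by ring)]
    rw [show (∑ x : Fin n, ∑ y, p y * C z y x x) = ∑ y : Fin n, ∑ x, p y * C z y x x from
      Finset.sum_comm, hm z, mul_zero]
  have T4 : ∑ x : Fin n, ∑ y, ∑ z, 4⁻¹ * (p z * W y) * C x x y z = 0 := by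
    rw [show (∑ x : Fin n, ∑ y, ∑ z, 4⁻¹ * (p z * W y) * C x x y z)
        = ∑ x : Fin n, ∑ y, ∑ z, 4⁻¹ * (p z * W y) * C y z x x from
      Finset.sum_congr rfl fun x _ => Finset.sum_congr rfl fun y _ =>
        Finset.sum_congr rfl fun z _ => by rw [s3], sum3_rot]
    refine Finset.sum_eq_zero fun y _ => ?_
    rw [sum_sum_cmul (4⁻¹ * W y) _ (fun z x => p z * C y z x x) (fun z x => by ring),
      hm y, mul_zero]
  conv_lhs => simp [tdot, muP, mul_ite, ite_mul, zero_mul, mul_add, add_mul,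
    Finset.sum_add_distrib, Finset.sum_ite_eq, Finset.sum_ite_eq']
  rw [T1, T2, T3, T4]; norm_num

lemma ortho_iota {n : ℕ} (p : Fin n → ℝ) (h : Fin n → Fin n → ℝ)
    (C : Fin n → Fin n → Fin n → Fin n → ℝ)
    (hC : Elastic C) (hio : ∀ i j, iotaPStar p C i j = 0) : tdot (iotaP p h) C = 0 := by
  obtain ⟨_s1, _s2, s3⟩ := hC
  have hi : ∀ i j, ∑ l, ∑ m, C i j l m * p l * p m = 0 := hio
  have U1 : ∑ x : Fin n, ∑ y, ∑ z, ∑ w, 2⁻¹ * (p x * p y * h z w) * C x y z w = 0 := by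
    rw [show (∑ x : Fin n, ∑ y, ∑ z, ∑ w, 2⁻¹ * (p x * p y * h z w) * C x y z w)
        = ∑ x : Fin n, ∑ y, ∑ z, ∑ w, 2⁻¹ * (p x * p y * h z w) * C z w x y from
      Finset.sum_congr rfl fun x _ => Finset.sum_congr rfl fun y _ =>
        Finset.sum_congr rfl fun z _ => Finset.sum_congr rfl fun w _ => by rw [s3],
      sum4_swap]
    refine Finset.sum_eq_zero fun z _ => Finset.sum_eq_zero fun w _ => ?_
    rw [sum_sum_cmul (2⁻¹ * h z w) _ (fun x y => C z w x y * p x * p y) (fun x y => by ring),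
      hi z w, mul_zero]
  have U2 : ∑ x : Fin n, ∑ y, ∑ z, ∑ w, 2⁻¹ * (p z * p w * h x y) * C x y z w = 0 := by
    refine Finset.sum_eq_zero fun x _ => Finset.sum_eq_zero fun y _ => ?_
    rw [sum_sum_cmul (2⁻¹ * h x y) _ (fun z w => C x y z w * p z * p w) (fun z w => by ring),
      hi x y, mul_zero]
  conv_lhs => simp [tdot, iotaP, mul_ite, ite_mul, zero_mul, mul_add, add_mul,
    Finset.sum_add_distrib, Finset.sum_ite_eq, Finset.sum_ite_eq']
  rw [U1, U2]; norm_num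

lemma ite_comm' {n : ℕ} (a b : Fin n) :
    (if a = b then (1:ℝ) else 0) = (if b = a then (1:ℝ) else 0) := by simp [eq_comm]

lemma elastic_muP {n : ℕ} (p W : Fin n → ℝ) : Elastic (muP p W) := by
  refine ⟨fun i j k l => ?_, fun i j k l => ?_, fun i j k l => ?_⟩
  · simp only [muP]; rw [ite_comm' j i]; ring
  · simp only [muP]; rw [ite_comm' l k]; ring
  · simp only [muP]; ring

lemma elastic_iotaP {n : ℕ} (p : Fin n → ℝ) (h : Fin n → Fin n → ℝ)
    (hs : ∀ i j, h i j = h j i) : Elastic (iotaP p h) := by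
  refine ⟨fun i j k l => ?_, fun i j k l => ?_, fun i j k l => ?_⟩
  · simp only [iotaP]; rw [hs j i]; ring
  · simp only [iotaP]; rw [hs l k]; ring
  · simp only [iotaP]; ring

lemma elastic_sub {n : ℕ} {S T : Fin n → Fin n → Fin n → Fin n → ℝ}
    (hS : Elastic S) (hT : Elastic T) : Elastic (S - T) := by
  obtain ⟨a1, a2, a3⟩ := hS; obtain ⟨b1, b2, b3⟩ := hT
  refine ⟨fun i j k l => ?_, fun i j k l => ?_, fun i j k l => ?_⟩ <;>
    simp only [Pi.sub_apply]
  · rw [a1 i j k l, b1 i j k l]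
  · rw [a2 i j k l, b2 i j k l]
  · rw [a3 i j k l, b3 i j k l]

lemma muPStar_sub {n : ℕ} (p : Fin n → ℝ) (S T : Fin n → Fin n → Fin n → Fin n → ℝ) (i : Fin n) :
    muPStar p (S - T) i = muPStar p S i - muPStar p T i := by
  simp [muPStar, Pi.sub_apply, mul_sub, Finset.sum_sub_distrib]

lemma iotaPStar_sub {n : ℕ} (p : Fin n → ℝ) (S T : Fin n → Fin n → Fin n → Fin n → ℝ) (i j : Fin n) :
    iotaPStar p (S - T) i j = iotaPStar p S i j - iotaPStar p T i j := by
  simp [iotaPStar, Pi.sub_apply, sub_mul, Finset.sum_sub_distrib]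

lemma tdot_add_left {n : ℕ} (A B C : Fin n → Fin n → Fin n → Fin n → ℝ) :
    tdot (A + B) C = tdot A C + tdot B C := by
  simp [tdot, Pi.add_apply, add_mul, Finset.sum_add_distrib]

lemma iotaPStar_symm {n : ℕ} (p : Fin n → ℝ) {T : Fin n → Fin n → Fin n → Fin n → ℝ}
    (hT : Elastic T) (i j : Fin n) : iotaPStar p T i j = iotaPStar p T j i := by
  exact Finset.sum_congr rfl fun l _ => Finset.sum_congr rfl fun m _ => by
    rw [hT.1 i j l m]

lemma trace_identity {n : ℕ} (p : Fin n → ℝ) {T : Fin n → Fin n → Fin n → Fin n → ℝ}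
    (hT : Elastic T) : ∑ i, muPStar p T i * p i = ∑ k, iotaPStar p T k k := by
  calc ∑ i, muPStar p T i * p i
      = ∑ i, ∑ β, ∑ l, p β * T i β l l * p i := by
        refine Finset.sum_congr rfl fun i _ => ?_
        rw [muPStar_eq, Finset.sum_mul]
        exact Finset.sum_congr rfl fun β _ => by rw [Finset.sum_mul]
    _ = ∑ i, ∑ β, ∑ l, p β * T l l i β * p i :=
        Finset.sum_congr rfl fun i _ => Finset.sum_congr rfl fun β _ =>
          Finset.sum_congr rfl fun l _ => by rw [hT.2.2 i β l l]
    _ = ∑ l, ∑ i, ∑ β, p β * T l l i β * p i := by rw [sum3_rot, sum3_rot]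
    _ = ∑ k, iotaPStar p T k k := Finset.sum_congr rfl fun k _ =>
        Finset.sum_congr rfl fun i _ => Finset.sum_congr rfl fun β _ => by
          show _ = T k k i β * p i * p β
          ring

lemma PP_pos {n : ℕ} {p : Fin n → ℝ} (hp : p ≠ 0) : 0 < ∑ k, p k * p k := by
  obtain ⟨i, hi⟩ := Function.ne_iff.mp hp
  exact Finset.sum_pos' (fun k _ => mul_self_nonneg _)
    ⟨i, Finset.mem_univ i, mul_self_pos.mpr hi⟩

lemma dim1_perp {p : Fin 1 → ℝ} (hp : p ≠ 0) {w : Fin 1 → ℝ}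
    (hw : ∑ i, w i * p i = 0) : ∀ i, w i = 0 := by
  intro i
  have h0 : w 0 * p 0 = 0 := by simpa using hw
  have hp0 : p 0 ≠ 0 := by
    intro h; exact hp (funext fun j => by rw [Subsingleton.elim j 0]; exact h)
  have := (mul_eq_zero.mp h0).resolve_right hp0
  rwa [Subsingleton.elim i 0]

lemma gp_contract {n : ℕ} (p : Fin n → ℝ) (g : Fin n → Fin n → ℝ) :
    ∑ i, (∑ j, g i j * p j) * p i = ∑ l, ∑ m, g l m * p l * p m :=
  Finset.sum_congr rfl fun i _ => by
    rw [Finset.sum_mul]; exact Finset.sum_congr rfl fun j _ => by ring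

lemma uniq_zero {n : ℕ} {p : Fin n → ℝ} (hp : p ≠ 0) (w : Fin n → ℝ) (g : Fin n → Fin n → ℝ)
    (hw : ∑ i, w i * p i = 0)
    (e1 : ∀ i, muPStar p (muP p w) i + muPStar p (iotaP p g) i = 0)
    (e2 : ∀ i j, iotaPStar p (muP p w) i j + iotaPStar p (iotaP p g) i j = 0) :
    (∀ i, w i = 0) ∧ (∀ i j, g i j = 0) := by
  have hP : (∑ k, p k * p k) ≠ 0 := ne_of_gt (PP_pos hp)
  have hP' : (∑ k, p k ^ 2) ≠ 0 := by simpa [sq] using hP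
  have hSw : ∑ k, p k * w k = 0 := by
    have hsh : ∑ k, p k * w k = ∑ i, w i * p i :=
      Finset.sum_congr rfl fun i _ => mul_comm _ _
    rw [hsh]; exact hw
  have f1 : ∀ i, ((n:ℝ)/4)*((∑ k, p k * p k)*w i)
      + (1/2)*((∑ k, p k * p k)*(∑ k, g k k)*p i
        + (∑ k, p k * p k)*(∑ j, g i j * p j)) = 0 := by
    intro i
    have h := e1 i
    rw [H1 p w i, H3 p g i] at h
    linear_combination h - (((n:ℝ)/4)*p i + (1/2)*p i) * hSw
  have f2 : ∀ i j, ((∑ k, p k * p k)/4)*(p i*w j + p j*w i)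
      + (1/2)*((∑ l, ∑ m, g l m * p l * p m)*(p i*p j)
        + (∑ k, p k * p k)^2*g i j) = 0 := by
    intro i j
    have h := e2 i j
    rw [H2 p w i j, H4 p g i j] at h
    linear_combination h - ((1/2)*(∑ k, p k * p k)*(if i = j then (1:ℝ) else 0)) * hSw
  -- contraction with p ⊗ p : gpp = 0
  have hgpp : (∑ l, ∑ m, g l m * p l * p m) = 0 := by
    have h0 : ∑ i, ∑ j, (((∑ k, p k * p k)/4)*(p i*w j + p j*w i)
        + (1/2)*((∑ l, ∑ m, g l m * p l * p m)*(p i*p j)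
          + (∑ k, p k * p k)^2*g i j)) * (p i * p j) = 0 :=
      Finset.sum_eq_zero fun i _ => Finset.sum_eq_zero fun j _ => by rw [f2 i j, zero_mul]
    have hsh : (∑ i, ∑ j, (((∑ k, p k * p k)/4)*(p i*w j + p j*w i)
        + (1/2)*((∑ l, ∑ m, g l m * p l * p m)*(p i*p j)
          + (∑ k, p k * p k)^2*g i j)) * (p i * p j))
      = ∑ i, ∑ j, (((∑ k, p k * p k)/4) * ((p i * p i) * (p j * w j))
          + ((∑ k, p k * p k)/4) * ((p i * w i) * (p j * p j))
          + ((1/2)*(∑ l, ∑ m, g l m * p l * p m)) * ((p i * p i) * (p j * p j))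
          + ((1/2)*(∑ k, p k * p k)^2) * (g i j * p i * p j)) :=
      Finset.sum_congr rfl fun i _ => Finset.sum_congr rfl fun j _ => by ring
    rw [hsh] at h0
    simp only [Finset.sum_add_distrib] at h0
    rw [sum_sum_eq ((∑ k, p k * p k)/4) (fun x => p x * p x) (fun y => p y * w y) _
        (fun x y => rfl),
      sum_sum_eq ((∑ k, p k * p k)/4) (fun x => p x * w x) (fun y => p y * p y) _
        (fun x y => rfl),
      sum_sum_eq ((1/2)*(∑ l, ∑ m, g l m * p l * p m)) (fun x => p x * p x)
        (fun y => p y * p y) _ (fun x y => rfl),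
      sum_sum_cmul ((1/2)*(∑ k, p k * p k)^2) _ (fun x y => g x y * p x * p y)
        (fun x y => rfl)] at h0
    have hE : (∑ k, p k * p k)^2 * (∑ l, ∑ m, g l m * p l * p m) = 0 := by
      linear_combination h0 - (((∑ k, p k * p k)/4)*(∑ x, p x * p x)
        + ((∑ k, p k * p k)/4)*(∑ y, p y * p y)) * hSw
    exact (mul_eq_zero.mp hE).resolve_left (pow_ne_zero 2 hP)
  -- contraction of f2 with p in second slot
  have hgpi : ∀ i, ((∑ k, p k * p k)/4 * w i) * (∑ j, p j * p j)
      + ((1/2)*(∑ k, p k * p k)^2) * (∑ j, g i j * p j) = 0 := by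
    intro i
    have h0 : ∑ j, ((((∑ k, p k * p k)/4)*(p i*w j + p j*w i)
        + (1/2)*((∑ l, ∑ m, g l m * p l * p m)*(p i*p j)
          + (∑ k, p k * p k)^2*g i j)) * p j) = 0 :=
      Finset.sum_eq_zero fun j _ => by rw [f2 i j, zero_mul]
    have hsh : (∑ j, ((((∑ k, p k * p k)/4)*(p i*w j + p j*w i)
        + (1/2)*((∑ l, ∑ m, g l m * p l * p m)*(p i*p j)
          + (∑ k, p k * p k)^2*g i j)) * p j))
      = ∑ j, ((((∑ k, p k * p k)/4)*(p i)) * (w j * p j)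
          + (((∑ k, p k * p k)/4)*(w i)) * (p j * p j)
          + (((1/2)*(∑ l, ∑ m, g l m * p l * p m))*(p i)) * (p j * p j)
          + ((1/2)*(∑ k, p k * p k)^2) * (g i j * p j)) :=
      Finset.sum_congr rfl fun j _ => by ring
    rw [hsh] at h0
    simp only [Finset.sum_add_distrib] at h0
    rw [sum_cmul ((((∑ k, p k * p k)/4)*(p i))) _ (fun j => w j * p j) (fun j => rfl),
      sum_cmul ((((∑ k, p k * p k)/4)*(w i))) _ (fun j => p j * p j) (fun j => rfl),
      sum_cmul ((((1/2)*(∑ l, ∑ m, g l m * p l * p m))*(p i))) _ (fun j => p j * p j)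
        (fun j => rfl),
      sum_cmul (((1/2)*(∑ k, p k * p k)^2)) _ (fun j => g i j * p j) (fun j => rfl)] at h0
    linear_combination h0 - (((∑ k, p k * p k)/4)*(p i)) * hw
      - ((1/2)*(p i)*(∑ j, p j * p j)) * hgpp
  -- contraction of f1 with p : trace of g
  have htrg : ((1/2)*(∑ k, p k * p k)*(∑ k, g k k))*(∑ i, p i * p i)
      + ((1/2)*(∑ k, p k * p k))*(∑ l, ∑ m, g l m * p l * p m) = 0 := by
    have h0 : ∑ i, ((((n:ℝ)/4)*((∑ k, p k * p k)*w i)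
        + (1/2)*((∑ k, p k * p k)*(∑ k, g k k)*p i
          + (∑ k, p k * p k)*(∑ j, g i j * p j))) * p i) = 0 :=
      Finset.sum_eq_zero fun i _ => by rw [f1 i, zero_mul]
    have hsh : (∑ i, ((((n:ℝ)/4)*((∑ k, p k * p k)*w i)
        + (1/2)*((∑ k, p k * p k)*(∑ k, g k k)*p i
          + (∑ k, p k * p k)*(∑ j, g i j * p j))) * p i))
      = ∑ i, ((((n:ℝ)/4)*(∑ k, p k * p k)) * (w i * p i)
          + ((1/2)*(∑ k, p k * p k)*(∑ k, g k k)) * (p i * p i)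
          + ((1/2)*(∑ k, p k * p k)) * ((∑ j, g i j * p j) * p i)) :=
      Finset.sum_congr rfl fun i _ => by ring
    rw [hsh] at h0
    simp only [Finset.sum_add_distrib] at h0
    rw [sum_cmul ((((n:ℝ)/4)*(∑ k, p k * p k))) _ (fun i => w i * p i) (fun i => rfl),
      sum_cmul (((1/2)*(∑ k, p k * p k)*(∑ k, g k k))) _ (fun i => p i * p i) (fun i => rfl),
      sum_cmul (((1/2)*(∑ k, p k * p k))) _ (fun i => (∑ j, g i j * p j) * p i) (fun i => rfl),
      gp_contract] at h0
    linear_combination h0 - (((n:ℝ)/4)*(∑ k, p k * p k)) * hw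
  -- conclude w = 0
  have hwkey : ∀ i, ((n:ℝ)-1) * (∑ k, p k * p k)^2 * w i = 0 := by
    intro i
    linear_combination (4*(∑ k, p k * p k)) * (f1 i) - 4 * (hgpi i) - (4*p i) * htrg
      + (2*(∑ k, p k * p k)*p i) * hgpp
  have hw0 : ∀ i, w i = 0 := by
    by_cases hn : n = 1
    · subst hn; exact dim1_perp hp hw
    · intro i
      have hne : ((n:ℝ)-1) * (∑ k, p k * p k)^2 ≠ 0 :=
        mul_ne_zero (sub_ne_zero.mpr (by exact_mod_cast hn)) (pow_ne_zero 2 hP)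
      exact (mul_eq_zero.mp (hwkey i)).resolve_left hne
  refine ⟨hw0, fun i j => ?_⟩
  have h := f2 i j
  rw [hw0 i, hw0 j, hgpp] at h
  have hE : (∑ k, p k * p k)^2 * g i j = 0 := by linear_combination 2*h
  exact (mul_eq_zero.mp hE).resolve_left (pow_ne_zero 2 hP)

noncomputable def uu {n : ℕ} (p : Fin n → ℝ) (T : Fin n → Fin n → Fin n → Fin n → ℝ) :
    Fin n → ℝ := fun i =>
  (∑ j, iotaPStar p T i j * p j)/(∑ k, p k * p k)
  - ((∑ l, ∑ m, iotaPStar p T l m * p l * p m)/(∑ k, p k * p k)^2) * p i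

noncomputable def ww {n : ℕ} (p : Fin n → ℝ) (T : Fin n → Fin n → Fin n → Fin n → ℝ) :
    Fin n → ℝ := fun i =>
  (4/(((n:ℝ)-1)*(∑ k, p k * p k))) * (muPStar p T i
    - ((∑ k, iotaPStar p T k k)/(∑ k, p k * p k))*p i - uu p T i)

noncomputable def vv {n : ℕ} (p : Fin n → ℝ) (T : Fin n → Fin n → Fin n → Fin n → ℝ) :
    Fin n → ℝ := fun i =>
  (2/(∑ k, p k * p k)^2) * (uu p T i - ((∑ k, p k * p k)/4) * ww p T i)

noncomputable def hh {n : ℕ} (p : Fin n → ℝ) (T : Fin n → Fin n → Fin n → Fin n → ℝ) :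
    Fin n → Fin n → ℝ := fun i j =>
  ((∑ l, ∑ m, iotaPStar p T l m * p l * p m)/(∑ k, p k * p k)^4)*(p i*p j)
  + p i * vv p T j + vv p T i * p j
  + (2/(∑ k, p k * p k)^2)*(iotaPStar p T i j
      - ((∑ l, ∑ m, iotaPStar p T l m * p l * p m)/(∑ k, p k * p k)^2)*(p i*p j)
      - p i * uu p T j - uu p T i * p j)

section Exist
variable {n : ℕ} {p : Fin n → ℝ} {T : Fin n → Fin n → Fin n → Fin n → ℝ}

lemma Fu (hp : p ≠ 0) : ∑ i, uu p T i * p i = 0 := by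
  have hP : (∑ k, p k * p k) ≠ 0 := ne_of_gt (PP_pos hp)
  have hP' : (∑ k, p k ^ 2) ≠ 0 := by simpa [sq] using hP
  have hsh : ∑ i, uu p T i * p i
      = ∑ i, ((1/(∑ k, p k * p k))*((∑ j, iotaPStar p T i j * p j) * p i)
        + (-((∑ l, ∑ m, iotaPStar p T l m * p l * p m)/(∑ k, p k * p k)^2))*(p i * p i)) :=
    Finset.sum_congr rfl fun i _ => by simp only [uu]; ring
  rw [hsh]
  simp only [Finset.sum_add_distrib]
  rw [sum_cmul ((1/(∑ k, p k * p k))) _ (fun i => (∑ j, iotaPStar p T i j * p j) * p i)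
      (fun i => rfl),
    sum_cmul ((-((∑ l, ∑ m, iotaPStar p T l m * p l * p m)/(∑ k, p k * p k)^2))) _
      (fun i => p i * p i) (fun i => rfl),
    gp_contract]
  field_simp
  ring

lemma Fz (hp : p ≠ 0) (hT : Elastic T) :
    ∑ i, (muPStar p T i - ((∑ k, iotaPStar p T k k)/(∑ k, p k * p k))*p i - uu p T i) * p i
      = 0 := by
  have hP : (∑ k, p k * p k) ≠ 0 := ne_of_gt (PP_pos hp)
  have hP' : (∑ k, p k ^ 2) ≠ 0 := by simpa [sq] using hP
  have hsh : ∑ i, (muPStar p T i - ((∑ k, iotaPStar p T k k)/(∑ k, p k * p k))*p i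
        - uu p T i) * p i
      = ∑ i, (muPStar p T i * p i
        + (-((∑ k, iotaPStar p T k k)/(∑ k, p k * p k)))*(p i * p i)
        + (-1)*(uu p T i * p i)) :=
    Finset.sum_congr rfl fun i _ => by ring
  rw [hsh]
  simp only [Finset.sum_add_distrib]
  rw [show (∑ i, muPStar p T i * p i + ∑ i, (-((∑ k, iotaPStar p T k k)/(∑ k, p k * p k)))*(p i * p i))
      = ∑ i, muPStar p T i * p i + ∑ i, (-((∑ k, iotaPStar p T k k)/(∑ k, p k * p k)))*(p i * p i) from rfl]
  rw [trace_identity p hT,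
    sum_cmul ((-((∑ k, iotaPStar p T k k)/(∑ k, p k * p k)))) _ (fun i => p i * p i)
      (fun i => rfl),
    sum_cmul ((-1 : ℝ)) _ (fun i => uu p T i * p i) (fun i => rfl),
    Fu hp]
  field_simp
  ring

lemma Fw (hp : p ≠ 0) (hT : Elastic T) : ∑ i, ww p T i * p i = 0 := by
  have hsh : ∑ i, ww p T i * p i
      = ∑ i, ((4/(((n:ℝ)-1)*(∑ k, p k * p k)))
        * ((muPStar p T i - ((∑ k, iotaPStar p T k k)/(∑ k, p k * p k))*p i - uu p T i) * p i)) :=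
    Finset.sum_congr rfl fun i _ => by simp only [ww]; ring
  rw [hsh, sum_cmul ((4/(((n:ℝ)-1)*(∑ k, p k * p k)))) _
    (fun i => (muPStar p T i - ((∑ k, iotaPStar p T k k)/(∑ k, p k * p k))*p i - uu p T i) * p i)
    (fun i => rfl), Fz hp hT, mul_zero]

lemma FwOr (hp : p ≠ 0) (hT : Elastic T) : ∑ i, p i * ww p T i = 0 := by
  have hsh : ∑ i, p i * ww p T i = ∑ i, ww p T i * p i :=
    Finset.sum_congr rfl fun i _ => mul_comm _ _
  rw [hsh]; exact Fw hp hT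

lemma Fv (hp : p ≠ 0) (hT : Elastic T) : ∑ i, vv p T i * p i = 0 := by
  have hsh : ∑ i, vv p T i * p i
      = ∑ i, ((2/(∑ k, p k * p k)^2)*(uu p T i * p i)
        + (-(2/(∑ k, p k * p k)^2)*((∑ k, p k * p k)/4))*(ww p T i * p i)) :=
    Finset.sum_congr rfl fun i _ => by simp only [vv]; ring
  rw [hsh]
  simp only [Finset.sum_add_distrib]
  rw [sum_cmul ((2/(∑ k, p k * p k)^2)) _ (fun i => uu p T i * p i) (fun i => rfl),
    sum_cmul ((-(2/(∑ k, p k * p k)^2)*((∑ k, p k * p k)/4))) _ (fun i => ww p T i * p i)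
      (fun i => rfl),
    Fu hp, Fw hp hT]
  ring

lemma FW7 (hp : p ≠ 0) (hT : Elastic T) : ∀ i, (((n:ℝ)-1)*(∑ k, p k * p k)/4) * ww p T i
    = muPStar p T i - ((∑ k, iotaPStar p T k k)/(∑ k, p k * p k))*p i - uu p T i := by
  have hP : (∑ k, p k * p k) ≠ 0 := ne_of_gt (PP_pos hp)
  have hP' : (∑ k, p k ^ 2) ≠ 0 := by simpa [sq] using hP
  by_cases hn : n = 1
  · subst hn
    intro i
    have hz := dim1_perp hp (w := fun i => muPStar p T i
      - ((∑ k, iotaPStar p T k k)/(∑ k, p k * p k))*p i - uu p T i) (Fz hp hT) i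
    rw [hz]
    norm_num
  · intro i
    have h1 : ((n:ℝ)-1) ≠ 0 := sub_ne_zero.mpr (by exact_mod_cast hn)
    simp only [ww]
    field_simp
end Exist

section GSolve
variable {n : ℕ} {p : Fin n → ℝ} {T : Fin n → Fin n → Fin n → Fin n → ℝ}

lemma hh_symm (hT : Elastic T) : ∀ i j, hh p T i j = hh p T j i := by
  intro i j
  simp only [hh]
  rw [iotaPStar_symm p hT i j]
  ring

lemma G2 (hp : p ≠ 0) (hT : Elastic T) : ∀ i, ∑ j, hh p T i j * p j
    = ((∑ l, ∑ m, iotaPStar p T l m * p l * p m)/(∑ k, p k * p k)^3)*p i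
      + (∑ k, p k * p k) * vv p T i := by
  have hP : (∑ k, p k * p k) ≠ 0 := ne_of_gt (PP_pos hp)
  have hP' : (∑ k, p k ^ 2) ≠ 0 := by simpa [sq] using hP
  intro i
  have hsh : ∑ j, hh p T i j * p j
      = ∑ j, ((((∑ l, ∑ m, iotaPStar p T l m * p l * p m)/(∑ k, p k * p k)^4)*(p i)) * (p j * p j)
        + (p i) * (vv p T j * p j)
        + (vv p T i) * (p j * p j)
        + ((2/(∑ k, p k * p k)^2)) * (iotaPStar p T i j * p j)
        + ((-(2/(∑ k, p k * p k)^2)*((∑ l, ∑ m, iotaPStar p T l m * p l * p m)/(∑ k, p k * p k)^2)*(p i))) * (p j * p j)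
        + ((-(2/(∑ k, p k * p k)^2))*(p i)) * (uu p T j * p j)
        + ((-(2/(∑ k, p k * p k)^2))*(uu p T i)) * (p j * p j)) :=
    Finset.sum_congr rfl fun j _ => by simp only [hh]; ring
  rw [hsh]
  simp only [Finset.sum_add_distrib]
  rw [sum_cmul ((((∑ l, ∑ m, iotaPStar p T l m * p l * p m)/(∑ k, p k * p k)^4)*(p i))) _
      (fun j => p j * p j) (fun j => rfl),
    sum_cmul ((p i)) _ (fun j => vv p T j * p j) (fun j => rfl),
    sum_cmul ((vv p T i)) _ (fun j => p j * p j) (fun j => rfl),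
    sum_cmul (((2/(∑ k, p k * p k)^2))) _ (fun j => iotaPStar p T i j * p j) (fun j => rfl),
    sum_cmul (((-(2/(∑ k, p k * p k)^2)*((∑ l, ∑ m, iotaPStar p T l m * p l * p m)/(∑ k, p k * p k)^2)*(p i)))) _
      (fun j => p j * p j) (fun j => rfl),
    sum_cmul (((-(2/(∑ k, p k * p k)^2))*(p i))) _ (fun j => uu p T j * p j) (fun j => rfl),
    sum_cmul (((-(2/(∑ k, p k * p k)^2))*(uu p T i))) _ (fun j => p j * p j) (fun j => rfl),
    Fv hp hT, Fu hp]
  simp only [uu]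
  field_simp
  ring

lemma G1 (hp : p ≠ 0) (hT : Elastic T) : ∑ k, hh p T k k
    = (∑ l, ∑ m, iotaPStar p T l m * p l * p m)/(∑ k, p k * p k)^3
      + (2/(∑ k, p k * p k)^2)*((∑ k, iotaPStar p T k k)
        - (∑ l, ∑ m, iotaPStar p T l m * p l * p m)/(∑ k, p k * p k)) := by
  have hP : (∑ k, p k * p k) ≠ 0 := ne_of_gt (PP_pos hp)
  have hP' : (∑ k, p k ^ 2) ≠ 0 := by simpa [sq] using hP
  have hsh : ∑ k, hh p T k k
      = ∑ k, ((((∑ l, ∑ m, iotaPStar p T l m * p l * p m)/(∑ k, p k * p k)^4)) * (p k * p k)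
        + (2 : ℝ) * (vv p T k * p k)
        + ((2/(∑ k, p k * p k)^2)) * (iotaPStar p T k k)
        + ((-(2/(∑ k, p k * p k)^2)*((∑ l, ∑ m, iotaPStar p T l m * p l * p m)/(∑ k, p k * p k)^2))) * (p k * p k)
        + ((-(2/(∑ k, p k * p k)^2))*2) * (uu p T k * p k)) :=
    Finset.sum_congr rfl fun k _ => by simp only [hh]; ring
  rw [hsh]
  simp only [Finset.sum_add_distrib]
  rw [sum_cmul ((((∑ l, ∑ m, iotaPStar p T l m * p l * p m)/(∑ k, p k * p k)^4))) _
      (fun k => p k * p k) (fun k => rfl),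
    sum_cmul ((2 : ℝ)) _ (fun k => vv p T k * p k) (fun k => rfl),
    sum_cmul (((2/(∑ k, p k * p k)^2))) _ (fun k => iotaPStar p T k k) (fun k => rfl),
    sum_cmul (((-(2/(∑ k, p k * p k)^2)*((∑ l, ∑ m, iotaPStar p T l m * p l * p m)/(∑ k, p k * p k)^2)))) _
      (fun k => p k * p k) (fun k => rfl),
    sum_cmul (((-(2/(∑ k, p k * p k)^2))*2)) _ (fun k => uu p T k * p k) (fun k => rfl),
    Fv hp hT, Fu hp]
  field_simp
  ring

lemma G3 (hp : p ≠ 0) (hT : Elastic T) : ∑ l, ∑ m, hh p T l m * p l * p m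
    = (∑ l, ∑ m, iotaPStar p T l m * p l * p m)/(∑ k, p k * p k)^2 := by
  have hP : (∑ k, p k * p k) ≠ 0 := ne_of_gt (PP_pos hp)
  have hP' : (∑ k, p k ^ 2) ≠ 0 := by simpa [sq] using hP
  have hsh : ∀ l, ∑ m, hh p T l m * p l * p m
      = ((∑ l, ∑ m, iotaPStar p T l m * p l * p m)/(∑ k, p k * p k)^3)*(p l * p l)
        + (∑ k, p k * p k)*(vv p T l * p l) := by
    intro l
    have e1 : ∑ m, hh p T l m * p l * p m = p l * ∑ m, hh p T l m * p m := by
      rw [Finset.mul_sum]; exact Finset.sum_congr rfl fun m _ => by ring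
    rw [e1, G2 hp hT l]
    ring
  rw [Finset.sum_congr rfl fun l _ => hsh l]
  simp only [Finset.sum_add_distrib]
  rw [sum_cmul (((∑ l, ∑ m, iotaPStar p T l m * p l * p m)/(∑ k, p k * p k)^3)) _
      (fun l => p l * p l) (fun l => rfl),
    sum_cmul ((∑ k, p k * p k)) _ (fun l => vv p T l * p l) (fun l => rfl),
    Fv hp hT]
  field_simp
  ring

lemma solveB (hp : p ≠ 0) (hT : Elastic T) : ∀ i j,
    iotaPStar p (muP p (ww p T)) i j + iotaPStar p (iotaP p (hh p T)) i j
      = iotaPStar p T i j := by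
  have hP : (∑ k, p k * p k) ≠ 0 := ne_of_gt (PP_pos hp)
  have hP' : (∑ k, p k ^ 2) ≠ 0 := by simpa [sq] using hP
  intro i j
  rw [H2 p (ww p T) i j, H4 p (hh p T) i j, G3 hp hT]
  rw [show (∑ k, p k * ww p T k) = 0 from FwOr hp hT]
  simp only [hh, vv, uu]
  field_simp
  ring

lemma solveA (hp : p ≠ 0) (hT : Elastic T) : ∀ i,
    muPStar p (muP p (ww p T)) i + muPStar p (iotaP p (hh p T)) i = muPStar p T i := by
  have hP : (∑ k, p k * p k) ≠ 0 := ne_of_gt (PP_pos hp)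
  have hP' : (∑ k, p k ^ 2) ≠ 0 := by simpa [sq] using hP
  intro i
  rw [H1 p (ww p T) i, H3 p (hh p T) i, G1 hp hT, G2 hp hT i]
  rw [show (∑ j, p j * ww p T j) = 0 from FwOr hp hT]
  have h7 := FW7 hp hT i
  simp only [vv]
  field_simp at h7 ⊢
  linear_combination (2*(∑ k, p k ^ 2)) * h7
end GSolve

lemma muPStar_add {n : ℕ} (p : Fin n → ℝ) (S T : Fin n → Fin n → Fin n → Fin n → ℝ) (i : Fin n) :
    muPStar p (S + T) i = muPStar p S i + muPStar p T i := by
  simp [muPStar, Pi.add_apply, mul_add, Finset.sum_add_distrib]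

lemma iotaPStar_add {n : ℕ} (p : Fin n → ℝ) (S T : Fin n → Fin n → Fin n → Fin n → ℝ)
    (i j : Fin n) : iotaPStar p (S + T) i j = iotaPStar p S i j + iotaPStar p T i j := by
  simp [iotaPStar, Pi.add_apply, add_mul, Finset.sum_add_distrib]

/-- For nonzero `p` the space `E` of elastic 2-tensors decomposes as the
direct sum `E = A_p ⊕ B_p ⊕ C_p` with `A_p ⊕ B_p` orthogonal to `C_p`. -/
theorem pointwise_helmholtz_decomposition (n : ℕ) (p : Fin n → ℝ) (hp : p ≠ 0) :
    (∀ T : Fin n → Fin n → Fin n → Fin n → ℝ, Elastic T →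
      ∃! x : (Fin n → Fin n → Fin n → Fin n → ℝ) × (Fin n → Fin n → Fin n → Fin n → ℝ)
          × (Fin n → Fin n → Fin n → Fin n → ℝ),
        MemA p x.1 ∧ MemB p x.2.1 ∧ MemC p x.2.2 ∧ T = x.1 + x.2.1 + x.2.2)
    ∧ (∀ A B C : Fin n → Fin n → Fin n → Fin n → ℝ,
        MemA p A → MemB p B → MemC p C → tdot (A + B) C = 0) := by
  constructor
  · intro T hT
    set A0 : Fin n → Fin n → Fin n → Fin n → ℝ := muP p (ww p T) with hA0
    set B0 : Fin n → Fin n → Fin n → Fin n → ℝ := iotaP p (hh p T) with hB0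
    set C0 : Fin n → Fin n → Fin n → Fin n → ℝ := T - A0 - B0 with hC0
    have hC0mu : muPStar p C0 = 0 := by
      funext i
      rw [hC0, muPStar_sub, muPStar_sub]
      have := solveA hp hT i
      simp only [Pi.zero_apply, hA0, hB0]
      linarith
    have hC0io : iotaPStar p C0 = 0 := by
      funext i j
      rw [hC0, iotaPStar_sub, iotaPStar_sub]
      have := solveB hp hT i j
      simp only [Pi.zero_apply, hA0, hB0]
      linarith
    have hC0el : Elastic C0 :=
      elastic_sub (elastic_sub hT (elastic_muP p _)) (elastic_iotaP p _ (hh_symm hT))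
    have hsum0 : T = A0 + B0 + C0 := by
      funext i j k l
      simp only [Pi.add_apply, Pi.sub_apply, hC0]
      ring
    refine ⟨⟨A0, B0, C0⟩, ⟨⟨ww p T, Fw hp hT, rfl⟩, ⟨hh p T, hh_symm hT, rfl⟩,
      ⟨hC0el, hC0mu, hC0io⟩, hsum0⟩, ?_⟩
    rintro ⟨A', B', C'⟩ ⟨⟨W', hW', rfl⟩, ⟨h', hs', rfl⟩, ⟨hC'el, hC'mu, hC'io⟩, hsum'⟩
    have key : muP p W' + iotaP p h' + C' = A0 + B0 + C0 := hsum'.symm.trans hsum0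
    have hpt : ∀ i j k l, muP p W' i j k l + iotaP p h' i j k l + C' i j k l
        = A0 i j k l + B0 i j k l + C0 i j k l := fun i j k l => by
      have := congrFun (congrFun (congrFun (congrFun key i) j) k) l
      simpa [Pi.add_apply] using this
    have hfun : muP p (fun a => W' a - ww p T a) + iotaP p (fun a b => h' a b - hh p T a b)
        = C0 - C' := by
      funext i j k l
      have h4 := hpt i j k l
      simp only [hA0, hB0, muP, iotaP, Pi.add_apply, Pi.sub_apply] at h4 ⊢
      ring_nf
      ring_nf at h4
      linarith
    have hw : ∑ i, (fun a => W' a - ww p T a) i * p i = 0 := by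
      have e : ∑ i, (W' i - ww p T i) * p i
          = ∑ i, (W' i * p i) - ∑ i, (ww p T i * p i) := by
        rw [← Finset.sum_sub_distrib]; exact Finset.sum_congr rfl fun i _ => by ring
      show ∑ i, (W' i - ww p T i) * p i = 0
      rw [e, hW', Fw hp hT]; ring
    have e1 : ∀ i, muPStar p (muP p (fun a => W' a - ww p T a)) i
        + muPStar p (iotaP p (fun a b => h' a b - hh p T a b)) i = 0 := by
      intro i
      rw [← muPStar_add, hfun, muPStar_sub]
      have h1 := congrFun hC0mu i
      have h2 := congrFun hC'mu i
      simp only [Pi.zero_apply] at h1 h2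
      rw [h1, h2]; ring
    have e2 : ∀ i j, iotaPStar p (muP p (fun a => W' a - ww p T a)) i j
        + iotaPStar p (iotaP p (fun a b => h' a b - hh p T a b)) i j = 0 := by
      intro i j
      rw [← iotaPStar_add, hfun, iotaPStar_sub]
      have h1 := congrFun (congrFun hC0io i) j
      have h2 := congrFun (congrFun hC'io i) j
      simp only [Pi.zero_apply] at h1 h2
      rw [h1, h2]; ring
    obtain ⟨hw0, hg0⟩ := uniq_zero hp (fun a => W' a - ww p T a)
      (fun a b => h' a b - hh p T a b) hw e1 e2
    have hWeq : W' = ww p T := funext fun i => sub_eq_zero.mp (hw0 i)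
    have hheq : h' = hh p T := funext fun i => funext fun j => sub_eq_zero.mp (hg0 i j)
    have hAeq : muP p W' = A0 := by rw [hWeq, hA0]
    have hBeq : iotaP p h' = B0 := by rw [hheq, hB0]
    have hCeq : C' = C0 := by
      rw [hAeq, hBeq] at key
      exact add_left_cancel key
    simp only [Prod.mk.injEq]
    exact ⟨hAeq, hBeq, hCeq⟩
  · rintro A B C ⟨W, hW, rfl⟩ ⟨h, hs, rfl⟩ ⟨hCel, hCmu, hCio⟩
    rw [tdot_add_left,
      ortho_mu p W C hCel (fun i => by simpa using congrFun hCmu i),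
      ortho_iota p h C hCel (fun i j => by simpa using congrFun (congrFun hCio i) j)]
    ring
end

section
/- Let n ≥ 3 and let p = (1,0,…,0) ∈ ℝⁿ. Let a be an elastic 2-tensor (a_{ijkl} = a_{jikl} = a_{ijlk} = a_{klij}) with a_{11ij} = 0 for all i,j. Then the following are equivalent: (1) for all unit v ⊥ p, ∑ a_{ijkl} v_i v_j v_k v_l = 0 and ∑ a_{ijkl} v_i q_j v_k q_l = 0 for all q ⊥ v; (2) for all i,j,k,l ≥ 2: a_{ijkl} = 0, a_{1i1j} = 0, a_{1ijk} = 0 when j ≠ k, and a_{1i22} = a_{1i33} = ⋯ = a_{1inn}. -/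
open scoped BigOperators

namespace ReductionAux

variable {n : ℕ}

lemma sum4_congr {F G : Fin n → Fin n → Fin n → Fin n → ℝ}
    (h : ∀ i j k l, F i j k l = G i j k l) :
    (∑ i, ∑ j, ∑ k, ∑ l, F i j k l) = ∑ i, ∑ j, ∑ k, ∑ l, G i j k l :=
  Finset.sum_congr rfl fun i _ => Finset.sum_congr rfl fun j _ =>
    Finset.sum_congr rfl fun k _ => Finset.sum_congr rfl fun l _ => h i j k l

lemma sum3_congr {F G : Fin n → Fin n → Fin n → ℝ}
    (h : ∀ i j k, F i j k = G i j k) :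
    (∑ i, ∑ j, ∑ k, F i j k) = ∑ i, ∑ j, ∑ k, G i j k :=
  Finset.sum_congr rfl fun i _ => Finset.sum_congr rfl fun j _ =>
    Finset.sum_congr rfl fun k _ => h i j k

lemma sum4_swap12 (F : Fin n → Fin n → Fin n → Fin n → ℝ) :
    (∑ i, ∑ j, ∑ k, ∑ l, F i j k l) = ∑ i, ∑ j, ∑ k, ∑ l, F j i k l := Finset.sum_comm

lemma sum4_swap34 (F : Fin n → Fin n → Fin n → Fin n → ℝ) :
    (∑ i, ∑ j, ∑ k, ∑ l, F i j k l) = ∑ i, ∑ j, ∑ k, ∑ l, F i j l k :=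
  Finset.sum_congr rfl fun _ _ => Finset.sum_congr rfl fun _ _ => Finset.sum_comm

def e4 {α : Type*} : (α × α × α × α) ≃ (α × α × α × α) :=
  ⟨fun p => (p.2.2.1, p.2.2.2, p.1, p.2.1), fun p => (p.2.2.1, p.2.2.2, p.1, p.2.1),
    fun _ => rfl, fun _ => rfl⟩

lemma sum4_prod (F : Fin n → Fin n → Fin n → Fin n → ℝ) :
    (∑ i, ∑ j, ∑ k, ∑ l, F i j k l)
      = ∑ x : Fin n × Fin n × Fin n × Fin n, F x.1 x.2.1 x.2.2.1 x.2.2.2 := by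
  simp only [Fintype.sum_prod_type]

lemma sum4_pairswap (F : Fin n → Fin n → Fin n → Fin n → ℝ) :
    (∑ i, ∑ j, ∑ k, ∑ l, F i j k l) = ∑ i, ∑ j, ∑ k, ∑ l, F k l i j := by
  rw [sum4_prod, sum4_prod]
  exact Fintype.sum_equiv e4 _ _ (fun p => rfl)

def e3 {α : Type*} : (α × α × α) ≃ (α × α × α) :=
  ⟨fun p => (p.2.1, p.2.2, p.1), fun p => (p.2.2, p.1, p.2.1), fun _ => rfl, fun _ => rfl⟩

lemma sum3_prod (F : Fin n → Fin n → Fin n → ℝ) :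
    (∑ i, ∑ j, ∑ k, F i j k) = ∑ x : Fin n × Fin n × Fin n, F x.1 x.2.1 x.2.2 := by
  simp only [Fintype.sum_prod_type]

lemma sum3_rot (F : Fin n → Fin n → Fin n → ℝ) :
    (∑ i, ∑ j, ∑ k, F i j k) = ∑ i, ∑ j, ∑ k, F k i j := by
  rw [sum3_prod, sum3_prod]
  exact Fintype.sum_equiv e3 _ _ (fun p => rfl)

variable (a : Fin n → Fin n → Fin n → Fin n → ℝ)

/-- quartic form -/
def Qf (v : Fin n → ℝ) : ℝ := ∑ i, ∑ j, ∑ k, ∑ l, a i j k l * v i * v j * v k * v l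
/-- mixed form -/
def Mf (v q : Fin n → ℝ) : ℝ := ∑ i, ∑ j, ∑ k, ∑ l, a i j k l * v i * q j * v k * q l
/-- cubic-linear form -/
def Cf (v w : Fin n → ℝ) : ℝ := ∑ i, ∑ j, ∑ k, ∑ l, a i j k l * v i * v j * v k * w l

/-- indicator vector -/
def ind (r : Fin n) : Fin n → ℝ := fun m => if m = r then 1 else 0

variable {a}

lemma slot2_eq (h3 : ∀ i j k l, a i j k l = a k l i j) (v w : Fin n → ℝ) :
    (∑ i, ∑ j, ∑ k, ∑ l, a i j k l * v i * w j * v k * v l) = Cf a v w := by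
  unfold Cf
  calc (∑ i, ∑ j, ∑ k, ∑ l, a i j k l * v i * w j * v k * v l)
      = ∑ i, ∑ j, ∑ k, ∑ l, a k l i j * v i * w j * v k * v l :=
        sum4_congr fun i j k l => by rw [h3 i j k l]
    _ = ∑ i, ∑ j, ∑ k, ∑ l, a i j k l * v k * w l * v i * v j :=
        (sum4_pairswap (fun i j k l => a i j k l * v k * w l * v i * v j)).symm
    _ = _ := sum4_congr fun i j k l => by ring

lemma slot1_eq (h1 : ∀ i j k l, a i j k l = a j i k l)
    (h3 : ∀ i j k l, a i j k l = a k l i j) (v w : Fin n → ℝ) :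
    (∑ i, ∑ j, ∑ k, ∑ l, a i j k l * w i * v j * v k * v l) = Cf a v w := by
  calc (∑ i, ∑ j, ∑ k, ∑ l, a i j k l * w i * v j * v k * v l)
      = ∑ i, ∑ j, ∑ k, ∑ l, a j i k l * v j * w i * v k * v l :=
        sum4_congr fun i j k l => by rw [h1 i j k l]; ring
    _ = ∑ i, ∑ j, ∑ k, ∑ l, a i j k l * v i * w j * v k * v l :=
        (sum4_swap12 (fun i j k l => a i j k l * v i * w j * v k * v l)).symm
    _ = Cf a v w := slot2_eq h3 v w

lemma slot3_eq (h2 : ∀ i j k l, a i j k l = a i j l k) (v w : Fin n → ℝ) :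
    (∑ i, ∑ j, ∑ k, ∑ l, a i j k l * v i * v j * w k * v l) = Cf a v w := by
  unfold Cf
  calc (∑ i, ∑ j, ∑ k, ∑ l, a i j k l * v i * v j * w k * v l)
      = ∑ i, ∑ j, ∑ k, ∑ l, a i j l k * v i * v j * w k * v l :=
        sum4_congr fun i j k l => by rw [← h2 i j k l]
    _ = ∑ i, ∑ j, ∑ k, ∑ l, a i j k l * v i * v j * w l * v k :=
        (sum4_swap34 (fun i j k l => a i j k l * v i * v j * w l * v k)).symm
    _ = _ := sum4_congr fun i j k l => by ring

lemma D2_eq [NeZero n] (h3 : ∀ i j k l, a i j k l = a k l i j) (v u : Fin n → ℝ) :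
    (∑ i, ∑ j, ∑ k, a i j k 0 * v i * u j * v k)
      = ∑ i, ∑ k, ∑ l, a i 0 k l * v i * v k * u l := by
  calc (∑ i, ∑ j, ∑ k, a i j k 0 * v i * u j * v k)
      = ∑ i, ∑ j, ∑ k, (fun x y z => a x 0 y z * v y * u z * v x) k i j :=
        sum3_congr fun i j k => by
          show a i j k 0 * v i * u j * v k = a k 0 i j * v i * u j * v k
          rw [h3 i j k 0]
    _ = ∑ i, ∑ j, ∑ k, (fun x y z => a x 0 y z * v y * u z * v x) i j k :=
        (sum3_rot (fun x y z => a x 0 y z * v y * u z * v x)).symm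
    _ = _ := sum3_congr fun i j k => by
          show a i 0 j k * v j * u k * v i = a i 0 j k * v i * v j * u k
          ring

lemma Qf_smul (c : ℝ) (v : Fin n → ℝ) : Qf a (fun m => c * v m) = c ^ 4 * Qf a v := by
  unfold Qf
  rw [show (∑ i, ∑ j, ∑ k, ∑ l, a i j k l * (c * v i) * (c * v j) * (c * v k) * (c * v l))
      = ∑ i, ∑ j, ∑ k, ∑ l, c ^ 4 * (a i j k l * v i * v j * v k * v l) from
    sum4_congr fun i j k l => by ring]
  simp only [← Finset.mul_sum]

lemma Mf_smul (c : ℝ) (v q : Fin n → ℝ) : Mf a (fun m => c * v m) q = c ^ 2 * Mf a v q := by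
  unfold Mf
  rw [show (∑ i, ∑ j, ∑ k, ∑ l, a i j k l * (c * v i) * q j * (c * v k) * q l)
      = ∑ i, ∑ j, ∑ k, ∑ l, c ^ 2 * (a i j k l * v i * q j * v k * q l) from
    sum4_congr fun i j k l => by ring]
  simp only [← Finset.mul_sum]

lemma Qexp (v w : Fin n → ℝ) (t : ℝ) :
    Qf a (fun m => v m + t * w m)
      = Qf a v
        + t * ((∑ i, ∑ j, ∑ k, ∑ l, a i j k l * w i * v j * v k * v l)
             + (∑ i, ∑ j, ∑ k, ∑ l, a i j k l * v i * w j * v k * v l)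
             + (∑ i, ∑ j, ∑ k, ∑ l, a i j k l * v i * v j * w k * v l)
             + (∑ i, ∑ j, ∑ k, ∑ l, a i j k l * v i * v j * v k * w l))
        + t ^ 2 * ((∑ i, ∑ j, ∑ k, ∑ l, a i j k l * w i * w j * v k * v l)
             + (∑ i, ∑ j, ∑ k, ∑ l, a i j k l * w i * v j * w k * v l)
             + (∑ i, ∑ j, ∑ k, ∑ l, a i j k l * w i * v j * v k * w l)
             + (∑ i, ∑ j, ∑ k, ∑ l, a i j k l * v i * w j * w k * v l)
             + (∑ i, ∑ j, ∑ k, ∑ l, a i j k l * v i * w j * v k * w l)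
             + (∑ i, ∑ j, ∑ k, ∑ l, a i j k l * v i * v j * w k * w l))
        + t ^ 3 * ((∑ i, ∑ j, ∑ k, ∑ l, a i j k l * v i * w j * w k * w l)
             + (∑ i, ∑ j, ∑ k, ∑ l, a i j k l * w i * v j * w k * w l)
             + (∑ i, ∑ j, ∑ k, ∑ l, a i j k l * w i * w j * v k * w l)
             + (∑ i, ∑ j, ∑ k, ∑ l, a i j k l * w i * w j * w k * v l))
        + t ^ 4 * Qf a w := by
  unfold Qf
  rw [show (∑ i, ∑ j, ∑ k, ∑ l,
        a i j k l * (v i + t * w i) * (v j + t * w j) * (v k + t * w k) * (v l + t * w l))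
      = ∑ i, ∑ j, ∑ k, ∑ l,
        (a i j k l * v i * v j * v k * v l
          + t * (a i j k l * w i * v j * v k * v l)
          + t * (a i j k l * v i * w j * v k * v l)
          + t * (a i j k l * v i * v j * w k * v l)
          + t * (a i j k l * v i * v j * v k * w l)
          + t ^ 2 * (a i j k l * w i * w j * v k * v l)
          + t ^ 2 * (a i j k l * w i * v j * w k * v l)
          + t ^ 2 * (a i j k l * w i * v j * v k * w l)
          + t ^ 2 * (a i j k l * v i * w j * w k * v l)
          + t ^ 2 * (a i j k l * v i * w j * v k * w l)
          + t ^ 2 * (a i j k l * v i * v j * w k * w l)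
          + t ^ 3 * (a i j k l * v i * w j * w k * w l)
          + t ^ 3 * (a i j k l * w i * v j * w k * w l)
          + t ^ 3 * (a i j k l * w i * w j * v k * w l)
          + t ^ 3 * (a i j k l * w i * w j * w k * v l)
          + t ^ 4 * (a i j k l * w i * w j * w k * w l)) from
    sum4_congr fun i j k l => by ring]
  simp only [Finset.sum_add_distrib, ← Finset.mul_sum]
  ring

lemma Mexp (v u : Fin n → ℝ) (c : ℝ) :
    Mf a v (fun m => c * v m + u m)
      = c ^ 2 * Qf a v
        + c * ((∑ i, ∑ j, ∑ k, ∑ l, a i j k l * v i * v j * v k * u l)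
             + (∑ i, ∑ j, ∑ k, ∑ l, a i j k l * v i * u j * v k * v l))
        + Mf a v u := by
  unfold Mf Qf
  rw [show (∑ i, ∑ j, ∑ k, ∑ l,
        a i j k l * v i * (c * v j + u j) * v k * (c * v l + u l))
      = ∑ i, ∑ j, ∑ k, ∑ l,
        (c ^ 2 * (a i j k l * v i * v j * v k * v l)
          + c * (a i j k l * v i * v j * v k * u l)
          + c * (a i j k l * v i * u j * v k * v l)
          + a i j k l * v i * u j * v k * u l) from
    sum4_congr fun i j k l => by ring]
  simp only [Finset.sum_add_distrib, ← Finset.mul_sum]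
  ring

lemma Dexp [NeZero n] (v u : Fin n → ℝ) (c : ℝ) :
    Mf a v (fun m => c * (if m = (0 : Fin n) then (1:ℝ) else 0) + u m)
      = c ^ 2 * (∑ i, ∑ k, a i 0 k 0 * v i * v k)
        + c * (∑ i, ∑ k, ∑ l, a i 0 k l * v i * v k * u l)
        + c * (∑ i, ∑ j, ∑ k, a i j k 0 * v i * u j * v k)
        + Mf a v u := by
  unfold Mf
  rw [show (∑ i, ∑ j, ∑ k, ∑ l,
        a i j k l * v i * (c * (if j = (0:Fin n) then (1:ℝ) else 0) + u j) * v k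
          * (c * (if l = (0:Fin n) then (1:ℝ) else 0) + u l))
      = ∑ i, ∑ j, ∑ k, ∑ l,
        ((if j = (0:Fin n) then (1:ℝ) else 0) *
            ((if l = (0:Fin n) then (1:ℝ) else 0) * (c ^ 2 * (a i j k l * v i * v k)))
          + (if j = (0:Fin n) then (1:ℝ) else 0) * (c * (a i j k l * v i * v k * u l))
          + (if l = (0:Fin n) then (1:ℝ) else 0) * (c * (a i j k l * v i * u j * v k))
          + a i j k l * v i * u j * v k * u l) from
    sum4_congr fun i j k l => by ring]
  simp only [Finset.sum_add_distrib, ite_mul, zero_mul, one_mul,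
    Finset.sum_ite_irrel, Finset.sum_const_zero,
    Finset.sum_ite_eq', Finset.mem_univ, if_true, ← Finset.mul_sum]

end ReductionAux

open ReductionAux

set_option maxHeartbeats 2000000 in
/-- Lemma `reduction`: Let `p = e₁` be the first standard basis vector
of ℝⁿ (`n ≥ 3`) and let `a` be an elastic 2-tensor with `a_{11ij} = 0`. The quartic and
mixed vanishing conditions over unit `v ⊥ p` are equivalent to the explicit linear
conditions on the components of `a`. Indices in `Fin n` are 0-based, so the index `0`
plays the role of `1` and indices `≠ 0` play the role of `i,j,k,l ≥ 2`. -/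
theorem reduction_lemma (n : ℕ) [NeZero n] (hn : 3 ≤ n)
    (p : Fin n → ℝ) (hp : p = fun i => if i = (0 : Fin n) then (1:ℝ) else 0)
    (a : Fin n → Fin n → Fin n → Fin n → ℝ)
    (hsymm1 : ∀ i j k l, a i j k l = a j i k l)
    (hsymm2 : ∀ i j k l, a i j k l = a i j l k)
    (hsymm3 : ∀ i j k l, a i j k l = a k l i j)
    (h11 : ∀ i j, a 0 0 i j = 0) :
    ((∀ v : Fin n → ℝ, (∑ i, v i ^ 2) = 1 → (∑ i, v i * p i) = 0 →
        ((∑ i, ∑ j, ∑ k, ∑ l, a i j k l * v i * v j * v k * v l) = 0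
          ∧ ∀ q : Fin n → ℝ, (∑ i, q i * v i) = 0 →
              (∑ i, ∑ j, ∑ k, ∑ l, a i j k l * v i * q j * v k * q l) = 0))
      ↔
      ((∀ i j k l : Fin n, i ≠ 0 → j ≠ 0 → k ≠ 0 → l ≠ 0 → a i j k l = 0)
        ∧ (∀ i j : Fin n, i ≠ 0 → j ≠ 0 → a 0 i 0 j = 0)
        ∧ (∀ i j k : Fin n, i ≠ 0 → j ≠ 0 → k ≠ 0 → j ≠ k → a 0 i j k = 0)
        ∧ (∀ i j k : Fin n, i ≠ 0 → j ≠ 0 → k ≠ 0 → a 0 i j j = a 0 i k k))) := by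
  subst hp
  constructor
  · -- forward direction
    intro H
    have hQM : ∀ v : Fin n → ℝ, v 0 = 0 → (∑ i, v i ^ 2) = 1 →
        (Qf a v = 0 ∧ ∀ q : Fin n → ℝ, (∑ i, q i * v i) = 0 → Mf a v q = 0) := by
      intro v h0 h1
      exact H v h1 (by simpa using h0)
    -- homogeneous quartic vanishing
    have hQ : ∀ v : Fin n → ℝ, v 0 = 0 → Qf a v = 0 := by
      intro v h0
      by_cases hS : (∑ i, v i ^ 2) = 0
      · have hz : ∀ i, v i = 0 := by
          intro i
          have h := (Finset.sum_eq_zero_iff_of_nonneg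
            (fun i _ => sq_nonneg (v i))).1 hS i (Finset.mem_univ i)
          exact pow_eq_zero_iff (two_ne_zero) |>.1 h
        simp [Qf, hz]
      · have hpos : 0 < ∑ i, v i ^ 2 :=
          (Finset.sum_nonneg fun i _ => sq_nonneg _).lt_of_ne (Ne.symm hS)
        have hsq : Real.sqrt (∑ i, v i ^ 2) ≠ 0 := ne_of_gt (Real.sqrt_pos.2 hpos)
        set c : ℝ := (Real.sqrt (∑ i, v i ^ 2))⁻¹ with hcdef
        have hc0 : c ≠ 0 := inv_ne_zero hsq
        have hw0 : (fun m => c * v m) 0 = 0 := by simp [h0]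
        have hw1 : (∑ i, ((fun m => c * v m) i) ^ 2) = 1 := by
          have e1 : (∑ i, ((fun m => c * v m) i) ^ 2) = c ^ 2 * ∑ i, v i ^ 2 := by
            rw [Finset.mul_sum]
            exact Finset.sum_congr rfl fun i _ => by ring
          rw [e1, hcdef, inv_pow, Real.sq_sqrt hpos.le, inv_mul_cancel₀ hS]
        have hq := (hQM _ hw0 hw1).1
        rw [Qf_smul] at hq
        exact (mul_eq_zero.mp hq).resolve_left (pow_ne_zero 4 hc0)
    -- homogeneous mixed vanishing (with orthogonality)
    have hM : ∀ v q : Fin n → ℝ, v 0 = 0 → (∑ i, q i * v i) = 0 → Mf a v q = 0 := by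
      intro v q h0 horth
      by_cases hS : (∑ i, v i ^ 2) = 0
      · have hz : ∀ i, v i = 0 := by
          intro i
          have h := (Finset.sum_eq_zero_iff_of_nonneg
            (fun i _ => sq_nonneg (v i))).1 hS i (Finset.mem_univ i)
          exact pow_eq_zero_iff (two_ne_zero) |>.1 h
        simp [Mf, hz]
      · have hpos : 0 < ∑ i, v i ^ 2 :=
          (Finset.sum_nonneg fun i _ => sq_nonneg _).lt_of_ne (Ne.symm hS)
        have hsq : Real.sqrt (∑ i, v i ^ 2) ≠ 0 := ne_of_gt (Real.sqrt_pos.2 hpos)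
        set c : ℝ := (Real.sqrt (∑ i, v i ^ 2))⁻¹ with hcdef
        have hc0 : c ≠ 0 := inv_ne_zero hsq
        have hw0 : (fun m => c * v m) 0 = 0 := by simp [h0]
        have hw1 : (∑ i, ((fun m => c * v m) i) ^ 2) = 1 := by
          have e1 : (∑ i, ((fun m => c * v m) i) ^ 2) = c ^ 2 * ∑ i, v i ^ 2 := by
            rw [Finset.mul_sum]
            exact Finset.sum_congr rfl fun i _ => by ring
          rw [e1, hcdef, inv_pow, Real.sq_sqrt hpos.le, inv_mul_cancel₀ hS]
        have horth' : (∑ i, q i * ((fun m => c * v m) i)) = 0 := by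
          have e1 : (∑ i, q i * ((fun m => c * v m) i)) = c * ∑ i, q i * v i := by
            rw [Finset.mul_sum]
            exact Finset.sum_congr rfl fun i _ => by ring
          rw [e1, horth, mul_zero]
        have hq := (hQM _ hw0 hw1).2 q horth'
        rw [Mf_smul] at hq
        exact (mul_eq_zero.mp hq).resolve_left (pow_ne_zero 2 hc0)
    -- step A1
    have hA1 : ∀ r j l : Fin n, r ≠ 0 → j ≠ r → l ≠ r → a r j r l = 0 := by
      intro r j l hr hj hl
      have m2 := hM (ind r) (fun m => ind j m + ind l m)
        (by simp [ind, Ne.symm hr]) (by simp [ind, hj, hl, Ne.symm hj, Ne.symm hl])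
      have mj := hM (ind r) (ind j) (by simp [ind, Ne.symm hr]) (by simp [ind, hj, Ne.symm hj])
      have ml := hM (ind r) (ind l) (by simp [ind, Ne.symm hr]) (by simp [ind, hl, Ne.symm hl])
      simp [Mf, Qf, Cf, ind, Finset.sum_add_distrib, Finset.sum_sub_distrib, add_mul, sub_mul, mul_add, mul_sub, ite_mul, mul_ite, zero_mul, mul_zero, one_mul, mul_one, Finset.sum_ite_irrel, Finset.sum_const_zero, Finset.sum_ite_eq', Finset.mem_univ, if_true] at m2 mj ml
      linarith [m2, mj, ml, hsymm3 r l r j]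
    -- a r 0 s 0 = 0
    have hB' : ∀ r s : Fin n, r ≠ 0 → s ≠ 0 → a r 0 s 0 = 0 := by
      intro r s hr hs
      have m := hM (fun m => ind r m + ind s m) (ind 0)
        (by simp [ind, Ne.symm hr, Ne.symm hs]) (by simp [ind, hr, hs, Ne.symm hr, Ne.symm hs])
      simp [Mf, Qf, Cf, ind, Finset.sum_add_distrib, Finset.sum_sub_distrib, add_mul, sub_mul, mul_add, mul_sub, ite_mul, mul_ite, zero_mul, mul_zero, one_mul, mul_one, Finset.sum_ite_irrel, Finset.sum_const_zero, Finset.sum_ite_eq', Finset.mem_univ, if_true] at m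
      linarith [m, hA1 r 0 0 hr (Ne.symm hr) (Ne.symm hr),
        hA1 s 0 0 hs (Ne.symm hs) (Ne.symm hs), hsymm3 s 0 r 0]
    -- c ≡ 0
    have hCf : ∀ v w : Fin n → ℝ, v 0 = 0 → w 0 = 0 → Cf a v w = 0 := by
      intro v w hv hw
      have E1 := hQ (fun m => v m + (1:ℝ) * w m) (by simp [hv, hw])
      have E2 := hQ (fun m => v m + (-1:ℝ) * w m) (by simp [hv, hw])
      have E3 := hQ (fun m => v m + (2:ℝ) * w m) (by simp [hv, hw])
      have E4 := hQ (fun m => v m + (-2:ℝ) * w m) (by simp [hv, hw])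
      rw [Qexp] at E1 E2 E3 E4
      have hQv := hQ v hv
      have hQw := hQ w hw
      have hA := slot1_eq hsymm1 hsymm3 v w
      have hB := slot2_eq hsymm3 v w
      have hC := slot3_eq hsymm2 v w
      have hDD : (∑ i, ∑ j, ∑ k, ∑ l, a i j k l * v i * v j * v k * w l) = Cf a v w := rfl
      rw [hQv, hQw, hA, hB, hC, hDD] at E1 E2 E3 E4
      norm_num at E1 E2 E3 E4
      linarith [E1, E2, E3, E4]
    -- mixed vanishing without orthogonality
    have hM2 : ∀ v q : Fin n → ℝ, v 0 = 0 → q 0 = 0 → Mf a v q = 0 := by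
      intro v q hv hq
      by_cases hS : (∑ i, v i ^ 2) = 0
      · have hz : ∀ i, v i = 0 := by
          intro i
          have h := (Finset.sum_eq_zero_iff_of_nonneg
            (fun i _ => sq_nonneg (v i))).1 hS i (Finset.mem_univ i)
          exact pow_eq_zero_iff (two_ne_zero) |>.1 h
        simp [Mf, hz]
      · set c : ℝ := (∑ i, q i * v i) / (∑ i, v i ^ 2) with hcdef
        set u : Fin n → ℝ := fun m => q m - c * v m with hudef
        have hu0 : u 0 = 0 := by simp [hudef, hv, hq]
        have huv : (∑ i, u i * v i) = 0 := by
          have e1 : (∑ i, u i * v i) = (∑ i, q i * v i) - c * ∑ i, v i ^ 2 := by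
            rw [Finset.mul_sum, ← Finset.sum_sub_distrib]
            exact Finset.sum_congr rfl fun i _ => by simp only [hudef]; ring
          rw [e1, hcdef, div_mul_cancel₀ _ hS, sub_self]
        have hqu : q = fun m => c * v m + u m := funext fun m => by simp [hudef]
        rw [hqu, Mexp]
        have hSA : (∑ i, ∑ j, ∑ k, ∑ l, a i j k l * v i * v j * v k * u l) = Cf a v u := rfl
        have hSB := slot2_eq hsymm3 v u
        rw [hSA, hSB, hCf v u hv hu0, hQ v hv, hM v u hv huv]
        ring
    -- antisymmetry relation (I)
    have hI : ∀ i j k l : Fin n, i ≠ 0 → j ≠ 0 → k ≠ 0 → l ≠ 0 →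
        a i j k l = - a i l j k := by
      intro i j k l hi hj hk hl
      have h33 := hM2 (fun m => ind i m + ind k m) (fun m => ind j m + ind l m)
        (by simp [ind, Ne.symm hi, Ne.symm hk]) (by simp [ind, Ne.symm hj, Ne.symm hl])
      have h13 := hM2 (ind i) (fun m => ind j m + ind l m)
        (by simp [ind, Ne.symm hi]) (by simp [ind, Ne.symm hj, Ne.symm hl])
      have h23 := hM2 (ind k) (fun m => ind j m + ind l m)
        (by simp [ind, Ne.symm hk]) (by simp [ind, Ne.symm hj, Ne.symm hl])
      have h31 := hM2 (fun m => ind i m + ind k m) (ind j)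
        (by simp [ind, Ne.symm hi, Ne.symm hk]) (by simp [ind, Ne.symm hj])
      have h32 := hM2 (fun m => ind i m + ind k m) (ind l)
        (by simp [ind, Ne.symm hi, Ne.symm hk]) (by simp [ind, Ne.symm hl])
      have h11' := hM2 (ind i) (ind j) (by simp [ind, Ne.symm hi]) (by simp [ind, Ne.symm hj])
      have h12' := hM2 (ind i) (ind l) (by simp [ind, Ne.symm hi]) (by simp [ind, Ne.symm hl])
      have h21' := hM2 (ind k) (ind j) (by simp [ind, Ne.symm hk]) (by simp [ind, Ne.symm hj])
      have h22' := hM2 (ind k) (ind l) (by simp [ind, Ne.symm hk]) (by simp [ind, Ne.symm hl])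
      simp [Mf, Qf, Cf, ind, Finset.sum_add_distrib, Finset.sum_sub_distrib, add_mul, sub_mul, mul_add, mul_sub, ite_mul, mul_ite, zero_mul, mul_zero, one_mul, mul_one, Finset.sum_ite_irrel, Finset.sum_const_zero, Finset.sum_ite_eq', Finset.mem_univ, if_true] at h33 h13 h23 h31 h32 h11' h12' h21' h22'
      have key : a i j k l + a i l k j + a k j i l + a k l i j = 0 := by
        linear_combination h33 - h13 - h23 - h31 - h32 + h11' + h12' + h21' + h22'
      linarith [key, hsymm3 k l i j, hsymm3 k j i l, hsymm2 i l k j]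
    -- symmetrization relation (S)
    have hSym : ∀ i j k l : Fin n, i ≠ 0 → j ≠ 0 → k ≠ 0 → l ≠ 0 →
        a i j k l + a i k j l + a i l j k = 0 := by
      intro i j k l hi hj hk hl
      have c7 := hCf (fun m => ind i m + ind j m + ind k m) (ind l)
        (by simp [ind, Ne.symm hi, Ne.symm hj, Ne.symm hk]) (by simp [ind, Ne.symm hl])
      have cij := hCf (fun m => ind i m + ind j m) (ind l)
        (by simp [ind, Ne.symm hi, Ne.symm hj]) (by simp [ind, Ne.symm hl])
      have cik := hCf (fun m => ind i m + ind k m) (ind l)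
        (by simp [ind, Ne.symm hi, Ne.symm hk]) (by simp [ind, Ne.symm hl])
      have cjk := hCf (fun m => ind j m + ind k m) (ind l)
        (by simp [ind, Ne.symm hj, Ne.symm hk]) (by simp [ind, Ne.symm hl])
      have ci := hCf (ind i) (ind l) (by simp [ind, Ne.symm hi]) (by simp [ind, Ne.symm hl])
      have cj := hCf (ind j) (ind l) (by simp [ind, Ne.symm hj]) (by simp [ind, Ne.symm hl])
      have ck := hCf (ind k) (ind l) (by simp [ind, Ne.symm hk]) (by simp [ind, Ne.symm hl])
      simp [Mf, Qf, Cf, ind, Finset.sum_add_distrib, Finset.sum_sub_distrib, add_mul, sub_mul, mul_add, mul_sub, ite_mul, mul_ite, zero_mul, mul_zero, one_mul, mul_one, Finset.sum_ite_irrel, Finset.sum_const_zero, Finset.sum_ite_eq', Finset.mem_univ, if_true] at c7 cij cik cjk ci cj ck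
      have S6 : a i j k l + a i k j l + a j i k l + a j k i l + a k i j l + a k j i l = 0 := by
        linear_combination c7 - cij - cik - cjk + ci + cj + ck
      linarith [S6, hsymm1 i j k l, hsymm1 i k j l, hsymm3 j k i l, hsymm3 k j i l,
        hsymm2 i l k j]
    -- goal (a)
    have Ha : ∀ i j k l : Fin n, i ≠ 0 → j ≠ 0 → k ≠ 0 → l ≠ 0 → a i j k l = 0 := by
      intro i j k l hi hj hk hl
      have e1 := hI i j k l hi hj hk hl
      have e2 := hI i k j l hi hk hj hl
      have e3 := hSym i j k l hi hj hk hl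
      linarith [e1, e2, e3, hsymm2 i l k j]
    -- the D-form vanishing
    have hD : ∀ v u : Fin n → ℝ, v 0 = 0 → u 0 = 0 → (∑ i, u i * v i) = 0 →
        (∑ i, ∑ k, ∑ l, a i 0 k l * v i * v k * u l) = 0 := by
      intro v u hv hu huv
      have horth : (∑ i, ((1:ℝ) * (if i = (0:Fin n) then (1:ℝ) else 0) + u i) * v i) = 0 := by
        simp [add_mul, Finset.sum_add_distrib, ite_mul, one_mul, zero_mul,
          Finset.sum_ite_eq', hv, huv]
      have m := hM v (fun m => (1:ℝ) * (if m = (0:Fin n) then (1:ℝ) else 0) + u m) hv horth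
      rw [Dexp] at m
      have hG1 : (∑ i, ∑ k, a i 0 k 0 * v i * v k) = 0 := by
        refine Finset.sum_eq_zero fun i _ => Finset.sum_eq_zero fun k _ => ?_
        by_cases hi : i = 0
        · simp [hi, hv]
        · by_cases hk : k = 0
          · simp [hk, hv]
          · simp [hB' i k hi hk]
      have hMvu := hM2 v u hv hu
      have hD2 := D2_eq hsymm3 v u
      rw [hG1, hMvu, hD2] at m
      linarith [m]
    -- goal (b)
    have Hb : ∀ i j : Fin n, i ≠ 0 → j ≠ 0 → a 0 i 0 j = 0 := by
      intro i j hi hj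
      linarith [hsymm1 0 i 0 j, hsymm2 i 0 0 j, hB' i j hi hj]
    -- goal (c), case i = j
    have hc1 : ∀ i k : Fin n, i ≠ 0 → k ≠ 0 → k ≠ i → a 0 i i k = 0 := by
      intro i k hi hk hki
      rw [hsymm1 0 i i k]
      exact hA1 i 0 k hi (Ne.symm hi) hki
    -- C1 antisymmetry
    have hC1 : ∀ r s l : Fin n, r ≠ 0 → s ≠ 0 → l ≠ 0 → r ≠ s → l ≠ r → l ≠ s →
        a 0 r s l + a 0 s r l = 0 := by
      intro r s l hr hs hl hrs hlr hls
      have m := hD (fun m => ind r m + ind s m) (ind l)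
        (by simp [ind, Ne.symm hr, Ne.symm hs]) (by simp [ind, Ne.symm hl])
        (by simp [ind, hlr, hls, Ne.symm hlr, Ne.symm hls])
      simp [Mf, Qf, Cf, ind, Finset.sum_add_distrib, Finset.sum_sub_distrib, add_mul, sub_mul, mul_add, mul_sub, ite_mul, mul_ite, zero_mul, mul_zero, one_mul, mul_one, Finset.sum_ite_irrel, Finset.sum_const_zero, Finset.sum_ite_eq', Finset.mem_univ, if_true] at m
      linarith [m, hA1 r 0 l hr (Ne.symm hr) hlr, hA1 s 0 l hs (Ne.symm hs) hls,
        hsymm1 0 r s l, hsymm1 0 s r l]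
    -- goal (c)
    have Hc : ∀ i j k : Fin n, i ≠ 0 → j ≠ 0 → k ≠ 0 → j ≠ k → a 0 i j k = 0 := by
      intro i j k hi hj hk hjk
      by_cases hij : i = j
      · subst hij
        exact hc1 i k hi hk (Ne.symm hjk)
      · by_cases hik : i = k
        · subst hik
          rw [hsymm2 0 i j i]
          exact hc1 i j hi hj (Ne.symm hij)
        · have c1 := hC1 i k j hi hk hj hik (Ne.symm hij) hjk
          have c2 := hC1 k j i hk hj hi (Ne.symm hjk) hik hij
          have c3 := hC1 j i k hj hi hk (Ne.symm hij) (Ne.symm hjk) (Ne.symm hik)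
          linarith [c1, c2, c3, hsymm2 0 i j k, hsymm2 0 j i k, hsymm2 0 k i j,
            hsymm2 0 i k j, hsymm2 0 j k i, hsymm2 0 k j i]
    -- key identity for goal (d)
    have hkey : ∀ r s : Fin n, r ≠ 0 → s ≠ 0 → r ≠ s → a 0 s r r = a 0 s s s := by
      intro r s hr hs hrs
      have d1 := hD (fun m => ind r m + ind s m) (fun m => ind r m - ind s m)
        (by simp [ind, Ne.symm hr, Ne.symm hs]) (by simp [ind, hr, hs, Ne.symm hr, Ne.symm hs])
        (by simp [Mf, Qf, Cf, ind, Finset.sum_add_distrib, Finset.sum_sub_distrib, add_mul, sub_mul, mul_add, mul_sub, ite_mul, mul_ite, zero_mul, mul_zero, one_mul, mul_one, Finset.sum_ite_irrel, Finset.sum_const_zero, Finset.sum_ite_eq', Finset.mem_univ, if_true, hrs, Ne.symm hrs])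
      have d2 := hD (fun m => ind r m - ind s m) (fun m => ind r m + ind s m)
        (by simp [ind, Ne.symm hr, Ne.symm hs]) (by simp [ind, hr, hs, Ne.symm hr, Ne.symm hs])
        (by simp [Mf, Qf, Cf, ind, Finset.sum_add_distrib, Finset.sum_sub_distrib, add_mul, sub_mul, mul_add, mul_sub, ite_mul, mul_ite, zero_mul, mul_zero, one_mul, mul_one, Finset.sum_ite_irrel, Finset.sum_const_zero, Finset.sum_ite_eq', Finset.mem_univ, if_true, hrs, Ne.symm hrs])
      simp [Mf, Qf, Cf, ind, Finset.sum_add_distrib, Finset.sum_sub_distrib, add_mul, sub_mul, mul_add, mul_sub, ite_mul, mul_ite, zero_mul, mul_zero, one_mul, mul_one, Finset.sum_ite_irrel, Finset.sum_const_zero, Finset.sum_ite_eq', Finset.mem_univ, if_true] at d1 d2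
      have k1 : a r 0 r s = 0 := hA1 r 0 s hr (Ne.symm hr) (Ne.symm hrs)
      have k2 : a s 0 s r = 0 := hA1 s 0 r hs (Ne.symm hs) hrs
      have k3 : a r 0 s r = 0 := by
        linarith [hsymm1 0 r s r, hsymm2 0 r s r, hsymm1 0 r r s, k1]
      have k4 : a s 0 r s = 0 := by
        linarith [hsymm1 0 s r s, hsymm2 0 s r s, hsymm1 0 s s r, k2]
      linarith [d1, d2, k1, k2, k3, k4, hsymm1 0 s r r, hsymm1 0 s s s]
    -- goal (d)
    have Hd : ∀ i j k : Fin n, i ≠ 0 → j ≠ 0 → k ≠ 0 → a 0 i j j = a 0 i k k := by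
      intro i j k hi hj hk
      have e1 : a 0 i j j = a 0 i i i := by
        by_cases hji : j = i
        · rw [hji]
        · exact hkey j i hj hi hji
      have e2 : a 0 i k k = a 0 i i i := by
        by_cases hki : k = i
        · rw [hki]
        · exact hkey k i hk hi hki
      rw [e1, e2]
    exact ⟨Ha, Hb, Hc, Hd⟩
  · -- backward direction
    rintro ⟨Ha, Hb, Hc, Hd⟩
    intro v hunit horth
    have hv0 : v 0 = 0 := by simpa using horth
    constructor
    · refine Finset.sum_eq_zero fun i _ => Finset.sum_eq_zero fun j _ =>
        Finset.sum_eq_zero fun k _ => Finset.sum_eq_zero fun l _ => ?_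
      by_cases hi : i = 0
      · simp [hi, hv0]
      by_cases hj : j = 0
      · simp [hj, hv0]
      by_cases hk : k = 0
      · simp [hk, hv0]
      by_cases hl : l = 0
      · simp [hl, hv0]
      simp [Ha i j k l hi hj hk hl]
    · intro q horthq
      set u : Fin n → ℝ := fun m => q m - q 0 * (if m = (0:Fin n) then (1:ℝ) else 0)
        with hudef
      have hu0 : u 0 = 0 := by simp [hudef]
      have hqu : q = fun m => q 0 * (if m = (0:Fin n) then (1:ℝ) else 0) + u m :=
        funext fun m => by simp [hudef]
      have huv : (∑ i, u i * v i) = 0 := by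
        have e1 : (∑ i, u i * v i)
            = (∑ i, q i * v i) - q 0 * ∑ i, (if i = (0:Fin n) then (1:ℝ) else 0) * v i := by
          rw [Finset.mul_sum, ← Finset.sum_sub_distrib]
          exact Finset.sum_congr rfl fun i _ => by simp only [hudef]; ring
        rw [e1, horthq]
        simp [Finset.sum_ite_eq', hv0]
      have hG1 : (∑ i, ∑ k, a i 0 k 0 * v i * v k) = 0 := by
        refine Finset.sum_eq_zero fun i _ => Finset.sum_eq_zero fun k _ => ?_
        by_cases hi : i = 0
        · simp [hi, hv0]
        · by_cases hk : k = 0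
          · simp [hk, hv0]
          · have : a i 0 k 0 = 0 := by
              linarith [hsymm1 i 0 k 0, hsymm2 0 i k 0, Hb i k hi hk]
            simp [this]
      have hD1 : (∑ i, ∑ k, ∑ l, a i 0 k l * v i * v k * u l) = 0 := by
        refine Finset.sum_eq_zero fun i _ => ?_
        by_cases hi : i = 0
        · refine Finset.sum_eq_zero fun k _ => Finset.sum_eq_zero fun l _ => ?_
          simp [hi, h11]
        · have e2 : (∑ k, ∑ l, a i 0 k l * v i * v k * u l)
              = ∑ k, a 0 i i i * v i * (v k * u k) := by
            refine Finset.sum_congr rfl fun k _ => ?_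
            by_cases hk : k = 0
            · simp [hk, hv0]
            · have e4 : a i 0 k k = a 0 i i i := by
                have h5 := hsymm1 i 0 k k
                have h6 := Hd i k i hi hk hi
                linarith [h5, h6]
              have e3 : ∀ l, a i 0 k l * v i * v k * u l
                  = if l = k then a 0 i i i * v i * (v k * u l) else 0 := by
                intro l
                by_cases hl : l = k
                · rw [hl, if_pos rfl, e4]; ring
                · rw [if_neg hl]
                  by_cases hl0 : l = 0
                  · simp [hl0, hu0]
                  · have e5 : a i 0 k l = 0 := by
                      have h5 := hsymm1 i 0 k l
                      have h6 := Hc i k l hi hk hl0 (fun h => hl h.symm)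
                      linarith [h5, h6]
                    simp [e5]
              calc (∑ l, a i 0 k l * v i * v k * u l)
                  = ∑ l, (if l = k then a 0 i i i * v i * (v k * u l) else 0) :=
                    Finset.sum_congr rfl fun l _ => e3 l
                _ = a 0 i i i * v i * (v k * u k) := by
                    rw [Finset.sum_ite_eq' Finset.univ k
                      (fun l => a 0 i i i * v i * (v k * u l))]
                    simp
          rw [e2, ← Finset.mul_sum,
            show (∑ k, v k * u k) = 0 from by
              rw [← huv]; exact Finset.sum_congr rfl fun k _ => by ring,
            mul_zero]
      have hMvu : Mf a v u = 0 := by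
        refine Finset.sum_eq_zero fun i _ => Finset.sum_eq_zero fun j _ =>
          Finset.sum_eq_zero fun k _ => Finset.sum_eq_zero fun l _ => ?_
        by_cases hi : i = 0
        · simp [hi, hv0]
        by_cases hj : j = 0
        · simp [hj, hu0]
        by_cases hk : k = 0
        · simp [hk, hv0]
        by_cases hl : l = 0
        · simp [hl, hu0]
        simp [Ha i j k l hi hj hk hl]
      have key : Mf a v q = 0 := by
        rw [hqu, Dexp, hG1, D2_eq hsymm3 v u, hD1, hMvu]
        ring
      exact key
end

section
/- Let n ≥ 1 and let f : ℝⁿ → Sym²(ℝⁿ) be a Schwartz symmetric-matrix-valued field with vanishing elastic X-ray transform, meaning ∫_ℝ ∑_{i,j} f_{ij}(x+tv) v_i q_j dt = 0 for all x ∈ ℝⁿ, unit vectors v, and q ∈ ℝv ∪ v⊥. Suppose moreover ∑_{i,j} ∂_i ∂_j f_{ij} = 0 (double divergence vanishes). Then f = 0. -/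
open scoped BigOperators
open MeasureTheory

noncomputable section Rank1Aux

open Real Complex SchwartzMap FourierTransform
open scoped InnerProductSpace

namespace Rank1Aux

variable {N : ℕ}

lemma lineTemperate (x v : EuclideanSpace ℝ (Fin N)) :
    Function.HasTemperateGrowth (fun t : ℝ => x + t • v) := by
  set L : ℝ →L[ℝ] EuclideanSpace ℝ (Fin N) := (1 : ℝ →L[ℝ] ℝ).smulRight v with hLdef
  have hL : ∀ t : ℝ, HasFDerivAt (fun s : ℝ => x + s • v) L t := by
    intro t
    have h1 := (L.hasFDerivAt (x := t)).const_add x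
    have : (fun s : ℝ => x + L s) = fun s : ℝ => x + s • v := by
      funext s
      simp [hLdef]
    rwa [this] at h1
  have hfd : fderiv ℝ (fun s : ℝ => x + s • v) = fun _ => L := by
    funext t
    exact (hL t).fderiv
  apply Function.HasTemperateGrowth.of_fderiv (k := 1) (C := ‖x‖ + ‖v‖)
  · rw [hfd]
    exact Function.HasTemperateGrowth.const L
  · exact fun t => (hL t).differentiableAt
  · intro t
    have h1 : ‖x + t • v‖ ≤ ‖x‖ + ‖t • v‖ := norm_add_le _ _
    rw [norm_smul] at h1
    have h2 : ‖(t:ℝ)‖ = |t| := rfl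
    have := norm_nonneg x
    have := norm_nonneg v
    have := abs_nonneg t
    calc ‖x + t • v‖ ≤ ‖x‖ + ‖t‖ * ‖v‖ := h1
    _ ≤ (‖x‖ + ‖v‖) * (1 + ‖t‖) ^ 1 := by
        rw [pow_one]
        have h6 := norm_nonneg t
        nlinarith

/-- Composition of a Schwartz function with a unit-speed line is integrable. -/
lemma line_integrable (h : SchwartzMap (EuclideanSpace ℝ (Fin N)) ℝ)
    (x v : EuclideanSpace ℝ (Fin N)) (hv : ‖v‖ = 1) :
    Integrable (fun t : ℝ => h (x + t • v)) := by
  have hupper : ∃ (k : ℕ) (C : ℝ), ∀ t : ℝ, ‖t‖ ≤ C * (1 + ‖x + t • v‖) ^ k := by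
    refine ⟨1, 1 + ‖x‖, fun t => ?_⟩
    have h0 : (x + t • v) - x = t • v := by abel
    have h1 : ‖t • v‖ = ‖(x + t • v) - x‖ := by rw [h0]
    have h2 : ‖(x + t • v) - x‖ ≤ ‖x + t • v‖ + ‖x‖ := norm_sub_le _ _
    have h3 : ‖t • v‖ = ‖t‖ * ‖v‖ := norm_smul t v
    have h4 := norm_nonneg x
    have h5 := norm_nonneg (x + t • v)
    rw [pow_one]
    nlinarith [h1, h2, h3, hv, norm_nonneg t, mul_nonneg h4 h5]
  have := (SchwartzMap.compCLM (𝕜 := ℝ) (lineTemperate x v) hupper h).integrable (μ := volume)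
  simpa [SchwartzMap.compCLM_apply, Function.comp_def] using this

/-- The Fourier slice theorem : if all line integrals of `h` in direction `v` vanish,
then the Fourier transform of `h` vanishes on the hyperplane `v^⊥`. -/
lemma slice {m : ℕ} (h : EuclideanSpace ℝ (Fin (m+1)) → ℝ)
    (hint : Integrable h)
    {v ξ : EuclideanSpace ℝ (Fin (m+1))} (hv : ‖v‖ = 1) (hperp : ⟪v, ξ⟫_ℝ = 0)
    (hline : ∀ x, (∫ t : ℝ, h (x + t • v)) = 0) :
    𝓕 (fun x => (h x : ℂ)) ξ = 0 := by
  classical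
  -- orthonormal basis with `b 0 = v`
  obtain ⟨b, hb0⟩ : ∃ b : OrthonormalBasis (Fin (m+1)) ℝ (EuclideanSpace ℝ (Fin (m+1))),
      b 0 = v := by
    have hcard : Module.finrank ℝ (EuclideanSpace ℝ (Fin (m+1))) = Fintype.card (Fin (m+1)) := by
      simp [finrank_euclideanSpace]
    have horth : Orthonormal ℝ (Set.restrict {(0 : Fin (m+1))} (fun _ => v)) := by
      constructor
      · intro i
        exact hv
      · intro i j hij
        exact absurd (Subsingleton.elim i j) hij
    obtain ⟨b, hb⟩ := horth.exists_orthonormalBasis_extension_of_card_eq hcard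
    exact ⟨b, hb 0 rfl⟩
  set Ψ : (ℝ × (Fin m → ℝ)) ≃ᵐ EuclideanSpace ℝ (Fin (m+1)) :=
    ((MeasurableEquiv.piFinSuccAbove (fun _ => ℝ) 0).symm.trans
      (MeasurableEquiv.toLp 2 (Fin (m+1) → ℝ))).trans
      b.repr.symm.toHomeomorph.toMeasurableEquiv with hΨdef
  have hΨmp : MeasurePreserving Ψ := by
    have mp1 : MeasurePreserving (MeasurableEquiv.piFinSuccAbove (fun _ : Fin (m+1) => ℝ) 0).symm :=
      (volume_preserving_piFinSuccAbove (fun _ : Fin (m+1) => ℝ) 0).symm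
    have mp2 : MeasurePreserving (MeasurableEquiv.toLp 2 (Fin (m+1) → ℝ)) :=
      (EuclideanSpace.volume_preserving_symm_measurableEquiv_toLp (Fin (m+1))).symm
    have mp3 : MeasurePreserving b.repr.symm.toHomeomorph.toMeasurableEquiv :=
      b.repr.symm.measurePreserving
    exact mp3.comp (mp2.comp mp1)
  -- the point map
  have hΨpt : ∀ (t : ℝ) (r : Fin m → ℝ), Ψ (t, r) = Ψ (0, r) + t • v := by
    intro t r
    have hins : ∀ s : ℝ, (Fin.insertNth (0 : Fin (m+1)) s r : Fin (m+1) → ℝ)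
        = (Fin.insertNth (0 : Fin (m+1)) (0:ℝ) r : Fin (m+1) → ℝ)
          + s • (Pi.single 0 1 : Fin (m+1) → ℝ) := by
      intro s
      funext k
      refine Fin.cases ?_ (fun j => ?_) k
      · simp
      · have h1 : (0 : Fin (m+1)).succAbove j = j.succ := Fin.zero_succAbove j
        rw [← h1]
        simp only [Fin.insertNth_apply_succAbove, Pi.add_apply, Pi.smul_apply, smul_eq_mul]
        rw [Pi.single_eq_of_ne (by rw [h1]; exact Fin.succ_ne_zero j)]
        ring
    have hcoe : ∀ p : ℝ × (Fin m → ℝ), Ψ p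
        = b.repr.symm ((WithLp.equiv 2 (Fin (m+1) → ℝ)).symm (Fin.insertNth 0 p.1 p.2)) := by
      intro p
      rfl
    rw [hcoe, hcoe, hins t]
    simp only [WithLp.equiv_symm_apply, WithLp.toLp_add, WithLp.toLp_smul, map_add,
      LinearIsometryEquiv.map_smul]
    congr 1
    rw [show (WithLp.toLp 2 (Pi.single 0 1 : Fin (m+1) → ℝ))
        = EuclideanSpace.single 0 (1:ℝ) from rfl]
    rw [OrthonormalBasis.repr_symm_single, hb0]
  -- integrability of the Fourier integrand
  have hcint : Integrable (fun x : EuclideanSpace ℝ (Fin (m+1)) => (h x : ℂ)) :=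
    Complex.ofRealCLM.integrable_comp hint
  have hGint : Integrable (fun x : EuclideanSpace ℝ (Fin (m+1)) => 𝐞 (-⟪x, ξ⟫_ℝ) • (h x : ℂ)) :=
    (Real.fourierIntegral_convergent_iff ξ).2 hcint
  rw [Real.fourier_eq]
  have hchg := hΨmp.integral_comp Ψ.measurableEmbedding
    (fun x : EuclideanSpace ℝ (Fin (m+1)) => 𝐞 (-⟪x, ξ⟫_ℝ) • (h x : ℂ))
  rw [← hchg]
  have hint2 : Integrable ((fun x : EuclideanSpace ℝ (Fin (m+1)) => 𝐞 (-⟪x, ξ⟫_ℝ) • (h x : ℂ)) ∘ Ψ) :=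
    (hΨmp.integrable_comp_emb Ψ.measurableEmbedding).2 hGint
  rw [show (∫ p : ℝ × (Fin m → ℝ), 𝐞 (-⟪Ψ p, ξ⟫_ℝ) • (h (Ψ p) : ℂ))
      = ∫ p : ℝ × (Fin m → ℝ),
          ((fun x : EuclideanSpace ℝ (Fin (m+1)) => 𝐞 (-⟪x, ξ⟫_ℝ) • (h x : ℂ)) ∘ Ψ) p from rfl]
  rw [Measure.volume_eq_prod] at hint2 ⊢
  rw [MeasureTheory.integral_prod_symm _ hint2]
  have hinner : ∀ r : Fin m → ℝ,
      (∫ t : ℝ, ((fun x : EuclideanSpace ℝ (Fin (m+1)) => 𝐞 (-⟪x, ξ⟫_ℝ) • (h x : ℂ)) ∘ Ψ) (t, r))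
        = 0 := by
    intro r
    have heq : ∀ t : ℝ,
        ((fun x : EuclideanSpace ℝ (Fin (m+1)) => 𝐞 (-⟪x, ξ⟫_ℝ) • (h x : ℂ)) ∘ Ψ) (t, r)
        = (𝐞 (-⟪Ψ (0, r), ξ⟫_ℝ) : ℂ) * ((h (Ψ (0, r) + t • v) : ℝ) : ℂ) := by
      intro t
      have h1 : ⟪Ψ (0, r) + t • v, ξ⟫_ℝ = ⟪Ψ (0, r), ξ⟫_ℝ := by
        rw [inner_add_left, real_inner_smul_left, hperp]
        ring
      simp only [Function.comp_apply, hΨpt t r, h1, Circle.smul_def, smul_eq_mul]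
    simp only [heq]
    rw [MeasureTheory.integral_const_mul]
    have : (∫ (a : ℝ), ((h (Ψ (0, r) + a • v) : ℝ) : ℂ))
        = ((∫ (a : ℝ), h (Ψ (0, r) + a • v) : ℝ) : ℂ) := integral_ofReal
    rw [this, hline (Ψ (0, r))]
    simp
  simp only [hinner, integral_zero]

lemma fourier_sum {ι : Type*} (s : Finset ι) (F : ι → EuclideanSpace ℝ (Fin N) → ℂ)
    (hF : ∀ i ∈ s, Integrable (F i)) (ξ : EuclideanSpace ℝ (Fin N)) :
    𝓕 (fun x => ∑ i ∈ s, F i x) ξ = ∑ i ∈ s, 𝓕 (F i) ξ := by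
  simp_rw [Real.fourier_eq, Finset.smul_sum]
  exact integral_finset_sum s (fun i hi => (Real.fourierIntegral_convergent_iff ξ).2 (hF i hi))

lemma fourier_const_mul (F : EuclideanSpace ℝ (Fin N) → ℂ) (C : ℂ)
    (ξ : EuclideanSpace ℝ (Fin N)) :
    𝓕 (fun x => C * F x) ξ = C * 𝓕 F ξ := by
  simp_rw [Real.fourier_eq, Circle.smul_def]
  calc (∫ x, (𝐞 (-⟪x, ξ⟫_ℝ) : ℂ) * (C * F x))
      = ∫ x, C * ((𝐞 (-⟪x, ξ⟫_ℝ) : ℂ) * F x) := by congr 1; funext x; ring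
  _ = C * ∫ x, (𝐞 (-⟪x, ξ⟫_ℝ) : ℂ) * F x := MeasureTheory.integral_const_mul _ _

lemma fourier_pderiv (u : SchwartzMap (EuclideanSpace ℝ (Fin N)) ℝ)
    (w ξ : EuclideanSpace ℝ (Fin N)) :
    𝓕 (fun x => ((fderiv ℝ u x w : ℝ) : ℂ)) ξ
      = (2 * ↑π * Complex.I * (⟪ξ, w⟫_ℝ : ℂ)) * 𝓕 (fun x => ((u x : ℝ) : ℂ)) ξ := by
  set cu : EuclideanSpace ℝ (Fin N) → ℂ := fun x => ((u x : ℝ) : ℂ) with hcu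
  have hderiv : ∀ x, HasFDerivAt cu (Complex.ofRealCLM.comp (fderiv ℝ u x)) x := by
    intro x
    exact (Complex.ofRealCLM.hasFDerivAt).comp x (u.differentiable x).hasFDerivAt
  have hdiff : Differentiable ℝ cu := fun x => (hderiv x).differentiableAt
  have hfd : fderiv ℝ cu = fun x => Complex.ofRealCLM.comp (fderiv ℝ u x) :=
    funext fun x => (hderiv x).fderiv
  have hint : Integrable cu := Complex.ofRealCLM.integrable_comp u.integrable
  have hint' : Integrable (fderiv ℝ cu) := by
    rw [hfd]
    have h2 : Integrable (fun x => fderiv ℝ u x) := by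
      have := (SchwartzMap.fderivCLM ℝ (EuclideanSpace ℝ (Fin N)) ℝ u).integrable (μ := volume)
      exact this
    exact (ContinuousLinearMap.compL ℝ (EuclideanSpace ℝ (Fin N)) ℝ ℂ
      Complex.ofRealCLM).integrable_comp h2
  have hmain := Real.fourier_fderiv hint hdiff hint'
  have happ : 𝓕 (fderiv ℝ cu) ξ w = 𝓕 (fun x => fderiv ℝ cu x w) ξ :=
    Real.fourier_continuousLinearMap_apply hint'
  have hrw : (fun x => ((fderiv ℝ u x w : ℝ) : ℂ)) = fun x => fderiv ℝ cu x w := by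
    rw [hfd]; rfl
  rw [hrw, ← happ, hmain, VectorFourier.fourierSMulRight_apply]
  simp only [ContinuousLinearMap.neg_apply, innerSL_apply_apply, real_inner_comm]
  rw [show (innerSL ℝ ξ) w = ⟪w, ξ⟫_ℝ from by rw [real_inner_comm]; exact innerSL_apply_apply (𝕜 := ℝ) (v := ξ) (w := w)]
  rw [Complex.real_smul, smul_eq_mul]
  push_cast
  ring

/-- Partial derivative on Schwartz space as a continuous linear map. -/
def _root_.SchwartzMap.pderivCLM (𝕜 : Type*) [RCLike 𝕜] {E F : Type*} [NormedAddCommGroup E]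
    [NormedSpace ℝ E] [NormedAddCommGroup F] [NormedSpace ℝ F] [NormedSpace 𝕜 F]
    [SMulCommClass ℝ 𝕜 F] (m : E) : SchwartzMap E F →L[𝕜] SchwartzMap E F :=
  SchwartzMap.evalCLM 𝕜 E F m ∘L SchwartzMap.fderivCLM 𝕜 E F

lemma _root_.SchwartzMap.pderivCLM_apply (𝕜 : Type*) [RCLike 𝕜] {E F : Type*}
    [NormedAddCommGroup E] [NormedSpace ℝ E] [NormedAddCommGroup F] [NormedSpace ℝ F]
    [NormedSpace 𝕜 F] [SMulCommClass ℝ 𝕜 F] (m : E) (f : SchwartzMap E F) (x : E) :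
    SchwartzMap.pderivCLM 𝕜 m f x = fderiv ℝ f x m :=
  rfl

lemma fourier_pderiv2 (u : SchwartzMap (EuclideanSpace ℝ (Fin N)) ℝ)
    (w₁ w₂ ξ : EuclideanSpace ℝ (Fin N)) :
    𝓕 (fun x => ((fderiv ℝ (fun y => fderiv ℝ u y w₂) x w₁ : ℝ) : ℂ)) ξ
      = (2 * ↑π * Complex.I * (⟪ξ, w₁⟫_ℝ : ℂ)) * ((2 * ↑π * Complex.I * (⟪ξ, w₂⟫_ℝ : ℂ)) *
          𝓕 (fun x => ((u x : ℝ) : ℂ)) ξ) := by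
  have hcoe : ⇑(SchwartzMap.pderivCLM ℝ w₂ u) = fun y => fderiv ℝ u y w₂ := by
    funext y; simp [SchwartzMap.pderivCLM_apply]
  have h1 := fourier_pderiv (SchwartzMap.pderivCLM ℝ w₂ u) w₁ ξ
  rw [hcoe] at h1
  rw [h1, fourier_pderiv u w₂ ξ]

lemma linalg {m : ℕ} (M : Fin (m+1) → Fin (m+1) → ℂ) (ξ : EuclideanSpace ℝ (Fin (m+1)))
    (hξ : ξ ≠ 0) (hsym : ∀ i j, M i j = M j i)
    (hperp : ∀ v w : EuclideanSpace ℝ (Fin (m+1)), ‖v‖ = 1 → ⟪v, ξ⟫_ℝ = 0 →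
      ∑ i, ∑ j, (v i : ℂ) * (w j : ℂ) * M i j = 0)
    (hquad : ∑ i, ∑ j, (ξ i : ℂ) * (ξ j : ℂ) * M i j = 0) :
    ∀ i j, M i j = 0 := by
  classical
  have hperp' : ∀ v w : EuclideanSpace ℝ (Fin (m+1)), ⟪v, ξ⟫_ℝ = 0 →
      ∑ i, ∑ j, (v i : ℂ) * (w j : ℂ) * M i j = 0 := by
    intro v w hvξ
    rcases eq_or_ne v 0 with rfl | hv0
    · simp
    · have hnv : ‖v‖ ≠ 0 := norm_ne_zero_iff.2 hv0
      set u : EuclideanSpace ℝ (Fin (m+1)) := ‖v‖⁻¹ • v with hu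
      have hu1 : ‖u‖ = 1 := by
        rw [hu, norm_smul, norm_inv, norm_norm, inv_mul_cancel₀ hnv]
      have huξ : ⟪u, ξ⟫_ℝ = 0 := by rw [hu, real_inner_smul_left, hvξ, mul_zero]
      have hkey := hperp u w hu1 huξ
      have hui : ∀ i, u i = ‖v‖⁻¹ * v i := fun i => rfl
      have hfac : ∑ i, ∑ j, (u i : ℂ) * (w j : ℂ) * M i j
          = ((‖v‖⁻¹ : ℝ) : ℂ) * ∑ i, ∑ j, (v i : ℂ) * (w j : ℂ) * M i j := by
        rw [Finset.mul_sum]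
        refine Finset.sum_congr rfl fun i _ => ?_
        rw [Finset.mul_sum]
        refine Finset.sum_congr rfl fun j _ => ?_
        rw [hui i]; push_cast; ring
      rw [hfac] at hkey
      rcases mul_eq_zero.mp hkey with h | h
      · exact absurd h (by simp [Complex.ofReal_ne_zero, hnv])
      · exact h
  have hrow : ∀ v : EuclideanSpace ℝ (Fin (m+1)), ⟪v, ξ⟫_ℝ = 0 →
      ∀ j, ∑ i, (v i : ℂ) * M i j = 0 := by
    intro v hvξ j
    have hkey := hperp' v (EuclideanSpace.single j 1) hvξ
    have hcol : ∀ i : Fin (m+1), (∑ j', (v i : ℂ) * ((EuclideanSpace.single j (1:ℝ)) j' : ℂ) * M i j')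
        = (v i : ℂ) * M i j := by
      intro i
      rw [Finset.sum_eq_single j]
      · simp [EuclideanSpace.single_apply]
      · intro b _ hb
        simp [EuclideanSpace.single_apply, hb]
      · intro hj; exact absurd (Finset.mem_univ j) hj
    rw [Finset.sum_congr rfl (fun i _ => hcol i)] at hkey
    exact hkey
  obtain ⟨i₀, hi₀⟩ : ∃ i, ξ i ≠ 0 := by
    by_contra hc; push_neg at hc
    exact hξ (by ext i; simpa using hc i)
  have hcol : ∀ k j, (ξ i₀ : ℂ) * M k j = (ξ k : ℂ) * M i₀ j := by
    intro k j
    rcases eq_or_ne k i₀ with rfl | hk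
    · rfl
    · set v : EuclideanSpace ℝ (Fin (m+1)) :=
        (ξ i₀) • EuclideanSpace.single k 1 - (ξ k) • EuclideanSpace.single i₀ 1 with hvdef
      have hvξ : ⟪v, ξ⟫_ℝ = 0 := by
        rw [hvdef, inner_sub_left, real_inner_smul_left, real_inner_smul_left,
          EuclideanSpace.inner_single_left, EuclideanSpace.inner_single_left]
        simp; ring
      have hrowv := hrow v hvξ j
      have hvi : ∀ i : Fin (m+1), v i
          = (ξ i₀) * (if i = k then (1:ℝ) else 0) - (ξ k) * (if i = i₀ then (1:ℝ) else 0) := by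
        intro i
        simp [hvdef, EuclideanSpace.single_apply]
      have hterm : ∀ i : Fin (m+1), (v i : ℂ) * M i j
          = (if i = k then (ξ i₀ : ℂ) * M i j else 0)
            - (if i = i₀ then (ξ k : ℂ) * M i j else 0) := by
        intro i
        rw [hvi i]
        split_ifs with h1 h2
        · exact absurd (h1.symm.trans h2) (by simpa [h1] using hk)
        · push_cast; ring
        · push_cast; ring
        · push_cast; ring
      rw [Finset.sum_congr rfl (fun i _ => hterm i), Finset.sum_sub_distrib,
        Finset.sum_ite_eq' Finset.univ k _, Finset.sum_ite_eq' Finset.univ i₀ _] at hrowv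
      simp only [Finset.mem_univ, if_true] at hrowv
      exact sub_eq_zero.mp hrowv
  have hkey : ∀ i j, (ξ i₀ : ℂ)^2 * M i j = (ξ i : ℂ) * (ξ j : ℂ) * M i₀ i₀ := by
    intro i j
    have h1 := hcol i j
    have h2 := hcol j i₀
    have h3 : M i₀ j = M j i₀ := hsym _ _
    calc (ξ i₀:ℂ)^2 * M i j = (ξ i₀:ℂ) * ((ξ i₀:ℂ) * M i j) := by ring
    _ = (ξ i₀:ℂ) * ((ξ i:ℂ) * M i₀ j) := by rw [h1]
    _ = (ξ i:ℂ) * ((ξ i₀:ℂ) * M j i₀) := by rw [h3]; ring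
    _ = (ξ i:ℂ) * ((ξ j:ℂ) * M i₀ i₀) := by rw [h2]
    _ = _ := by ring
  set Q : ℂ := ∑ i, (ξ i : ℂ)^2 with hQdef
  have hQ : Q ≠ 0 := by
    have : Q = ((∑ i, (ξ i)^2 : ℝ) : ℂ) := by push_cast; rfl
    rw [this, Complex.ofReal_ne_zero]
    have hpos : 0 < ∑ i, (ξ i)^2 :=
      Finset.sum_pos' (fun i _ => sq_nonneg _) ⟨i₀, Finset.mem_univ i₀, by positivity⟩
    exact ne_of_gt hpos
  have hM0 : M i₀ i₀ = 0 := by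
    have h1 : (ξ i₀:ℂ)^2 * (∑ i, ∑ j, (ξ i:ℂ)*(ξ j:ℂ)*M i j) = Q * Q * M i₀ i₀ := by
      rw [Finset.mul_sum]
      calc (∑ i, (ξ i₀:ℂ)^2 * ∑ j, (ξ i:ℂ)*(ξ j:ℂ)*M i j)
          = ∑ i, ∑ j, (ξ i:ℂ)*(ξ j:ℂ)*((ξ i₀:ℂ)^2 * M i j) := by
            refine Finset.sum_congr rfl fun i _ => ?_
            rw [Finset.mul_sum]
            exact Finset.sum_congr rfl fun j _ => by ring
      _ = ∑ i, ∑ j, ((ξ i:ℂ)^2*(ξ j:ℂ)^2) * M i₀ i₀ := by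
            refine Finset.sum_congr rfl fun i _ => Finset.sum_congr rfl fun j _ => ?_
            rw [hkey i j]; ring
      _ = Q * Q * M i₀ i₀ := by
            rw [hQdef, Finset.sum_mul_sum]
            rw [Finset.sum_mul]
            refine Finset.sum_congr rfl fun i _ => ?_
            rw [Finset.sum_mul]
      _ = Q * Q * M i₀ i₀ := rfl
    rw [hquad, mul_zero] at h1
    have h2 := h1.symm
    rcases mul_eq_zero.mp h2 with h | h
    · exact absurd h (mul_ne_zero hQ hQ)
    · exact h
  intro i j
  have hk := hkey i j
  rw [hM0, mul_zero] at hk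
  have hz : (ξ i₀:ℂ)^2 ≠ 0 := pow_ne_zero _ (Complex.ofReal_ne_zero.2 hi₀)
  exact (mul_eq_zero.mp hk).resolve_left hz

end Rank1Aux

/-- A Schwartz symmetric-matrix field `f` on ℝⁿ whose elastic X-ray
transform vanishes for all directions `v` and polarizations `q ∈ ℝv ∪ v⊥`, and whose
double divergence `∑ ∂_i ∂_j f_{ij}` vanishes, is identically zero. -/
theorem rank1_solenoidal_injectivity (n : ℕ) (hn : 1 ≤ n)
    (f : Fin n → Fin n → SchwartzMap (EuclideanSpace ℝ (Fin n)) ℝ)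
    (hsymm : ∀ i j, f i j = f j i)
    (hxray : ∀ (x v q : EuclideanSpace ℝ (Fin n)), ‖v‖ = 1 →
      ((∃ t : ℝ, q = t • v) ∨ inner ℝ q v = (0:ℝ)) →
      (∫ t : ℝ, ∑ i, ∑ j, f i j (x + t • v) * v i * q j) = 0)
    (hdiv : ∀ x : EuclideanSpace ℝ (Fin n),
      (∑ i, ∑ j, fderiv ℝ
        (fun y => fderiv ℝ (f i j) y (EuclideanSpace.single j 1)) x
        (EuclideanSpace.single i 1)) = 0) :
    ∀ i j, f i j = 0 := by
  classical
  obtain ⟨m, rfl⟩ : ∃ m, n = m + 1 := ⟨n - 1, by omega⟩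
  have hlint : ∀ (x v q : EuclideanSpace ℝ (Fin (m+1))), ‖v‖ = 1 →
      Integrable (fun t : ℝ => ∑ i, ∑ j, f i j (x + t • v) * v i * q j) := by
    intro x v q hv
    apply integrable_finset_sum
    intro i _
    apply integrable_finset_sum
    intro j _
    exact ((Rank1Aux.line_integrable (f i j) x v hv).mul_const (v i)).mul_const (q j)
  -- extend the x-ray condition to arbitrary polarizations
  have hxray' : ∀ (x v w : EuclideanSpace ℝ (Fin (m+1))), ‖v‖ = 1 →
      (∫ t : ℝ, ∑ i, ∑ j, f i j (x + t • v) * v i * w j) = 0 := by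
    intro x v w hv
    set c : ℝ := inner ℝ w v with hc
    set w' : EuclideanSpace ℝ (Fin (m+1)) := w - c • v with hw'
    have hw'perp : inner ℝ w' v = (0:ℝ) := by
      rw [hw', inner_sub_left, real_inner_smul_left, real_inner_self_eq_norm_sq, hv, hc]
      ring
    have hsplit : (fun t : ℝ => ∑ i, ∑ j, f i j (x + t • v) * v i * w j)
        = fun t : ℝ => c * (∑ i, ∑ j, f i j (x + t • v) * v i * v j)
          + (∑ i, ∑ j, f i j (x + t • v) * v i * w' j) := by
      funext t
      rw [Finset.mul_sum, ← Finset.sum_add_distrib]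
      refine Finset.sum_congr rfl fun i _ => ?_
      rw [Finset.mul_sum, ← Finset.sum_add_distrib]
      refine Finset.sum_congr rfl fun j _ => ?_
      have hwj : w j = c * v j + w' j := by simp [hw']
      rw [hwj]; ring
    rw [hsplit, MeasureTheory.integral_add ((hlint x v v hv).const_mul c) (hlint x v w' hv),
      MeasureTheory.integral_const_mul,
      hxray x v v hv (Or.inl ⟨1, (one_smul ℝ v).symm⟩),
      hxray x v w' hv (Or.inr hw'perp)]
    simp
  -- complexified fields and their Fourier transforms
  set g : Fin (m+1) → Fin (m+1) → (EuclideanSpace ℝ (Fin (m+1)) → ℂ) :=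
    fun i j => fun x => ((f i j x : ℝ) : ℂ) with hg
  have hgint : ∀ i j, Integrable (g i j) :=
    fun i j => Complex.ofRealCLM.integrable_comp (f i j).integrable
  set M : EuclideanSpace ℝ (Fin (m+1)) → Fin (m+1) → Fin (m+1) → ℂ :=
    fun ξ i j => 𝓕 (g i j) ξ with hM
  -- the quadratic (double divergence) condition in Fourier space
  have hquad : ∀ ξ : EuclideanSpace ℝ (Fin (m+1)),
      ∑ i, ∑ j, (ξ i : ℂ) * (ξ j : ℂ) * M ξ i j = 0 := by
    intro ξ
    set c : ℂ := 2 * (Real.pi : ℂ) * Complex.I with hcdef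
    have hcne : c ≠ 0 := by
      simp [hcdef, Real.pi_ne_zero, Complex.I_ne_zero, Complex.ofReal_ne_zero]
    set D : Fin (m+1) → Fin (m+1) → EuclideanSpace ℝ (Fin (m+1)) → ℂ := fun i j x =>
      ((fderiv ℝ (fun y => fderiv ℝ (f i j) y (EuclideanSpace.single j 1)) x
        (EuclideanSpace.single i 1) : ℝ) : ℂ) with hD
    have hDint : ∀ i j, Integrable (D i j) := by
      intro i j
      have hco : (fun x => (fderiv ℝ (fun y => fderiv ℝ (f i j) y (EuclideanSpace.single j 1)) x
          (EuclideanSpace.single i 1)))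
          = ⇑(SchwartzMap.pderivCLM ℝ (EuclideanSpace.single i 1)
              (SchwartzMap.pderivCLM ℝ (EuclideanSpace.single j 1) (f i j))) := by
        funext x
        have h1 : ⇑(SchwartzMap.pderivCLM ℝ (EuclideanSpace.single j 1) (f i j))
            = fun y => fderiv ℝ (f i j) y (EuclideanSpace.single j 1) := by
          funext y
          exact SchwartzMap.pderivCLM_apply ℝ _ (f i j) y
        have h2 : (⇑(SchwartzMap.pderivCLM ℝ (EuclideanSpace.single i 1)
            (SchwartzMap.pderivCLM ℝ (EuclideanSpace.single j 1) (f i j))) x)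
            = fderiv ℝ (⇑(SchwartzMap.pderivCLM ℝ (EuclideanSpace.single j 1) (f i j))) x
              (EuclideanSpace.single i 1) :=
          SchwartzMap.pderivCLM_apply ℝ _ _ x
        rw [h2, h1]
      have hI := Complex.ofRealCLM.integrable_comp
        ((SchwartzMap.pderivCLM ℝ (EuclideanSpace.single i 1)
          (SchwartzMap.pderivCLM ℝ (EuclideanSpace.single j 1) (f i j))).integrable
          (μ := volume))
      have heq : D i j = fun x => Complex.ofRealCLM
          ((SchwartzMap.pderivCLM ℝ (EuclideanSpace.single i 1)
            (SchwartzMap.pderivCLM ℝ (EuclideanSpace.single j 1) (f i j))) x) := by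
        funext x
        exact congrArg Complex.ofReal (congrFun hco x)
      rw [heq]
      exact hI
    have hsum0 : ∑ i, ∑ j, 𝓕 (D i j) ξ = 0 := by
      have hzero : (fun x => ∑ i, ∑ j, D i j x) = fun _ => (0 : ℂ) := by
        funext x
        have h1 := hdiv x
        have : ∑ i, ∑ j, D i j x
            = ((∑ i, ∑ j, fderiv ℝ
                (fun y => fderiv ℝ (f i j) y (EuclideanSpace.single j 1)) x
                (EuclideanSpace.single i 1) : ℝ) : ℂ) := by
          push_cast [hD]; rfl
        rw [this, h1, Complex.ofReal_zero]
      have h2 : 𝓕 (fun x => ∑ i, ∑ j, D i j x) ξ = ∑ i, ∑ j, 𝓕 (D i j) ξ := by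
        rw [Rank1Aux.fourier_sum Finset.univ (fun i => fun x => ∑ j, D i j x)
          (fun i _ => integrable_finset_sum _ (fun j _ => hDint i j)) ξ]
        exact Finset.sum_congr rfl fun i _ =>
          Rank1Aux.fourier_sum Finset.univ (fun j => D i j) (fun j _ => hDint i j) ξ
      rw [← h2, hzero]
      rw [Real.fourier_eq]
      simp
    have hterm : ∀ i j, 𝓕 (D i j) ξ = (c * (ξ i : ℂ)) * ((c * (ξ j : ℂ)) * M ξ i j) := by
      intro i j
      have h1 := Rank1Aux.fourier_pderiv2 (f i j)
        (EuclideanSpace.single i 1) (EuclideanSpace.single j 1) ξ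
      have hinner : ∀ k : Fin (m+1), ⟪ξ, EuclideanSpace.single k (1:ℝ)⟫_ℝ = ξ k := by
        intro k
        simp [EuclideanSpace.inner_single_right]
      rw [hinner, hinner] at h1
      have h2 : 𝓕 (D i j) ξ = 𝓕 (fun x => ((fderiv ℝ (fun y => fderiv ℝ (f i j) y
          (EuclideanSpace.single j 1)) x (EuclideanSpace.single i 1) : ℝ) : ℂ)) ξ := rfl
      have h3 : M ξ i j = 𝓕 (fun x => ((f i j x : ℝ) : ℂ)) ξ := rfl
      rw [h2, h1, h3, hcdef]
    rw [Finset.sum_congr rfl (fun i _ => Finset.sum_congr rfl (fun j _ => hterm i j))] at hsum0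
    have hfac : ∑ i, ∑ j, (c * (ξ i : ℂ)) * ((c * (ξ j : ℂ)) * M ξ i j)
        = c^2 * ∑ i, ∑ j, (ξ i : ℂ) * (ξ j : ℂ) * M ξ i j := by
      rw [Finset.mul_sum]
      refine Finset.sum_congr rfl fun i _ => ?_
      rw [Finset.mul_sum]
      exact Finset.sum_congr rfl fun j _ => by ring
    rw [hfac] at hsum0
    exact (mul_eq_zero.mp hsum0).resolve_left (pow_ne_zero _ hcne)
  -- the transverse condition in Fourier space
  have hperpM : ∀ (ξ v w : EuclideanSpace ℝ (Fin (m+1))), ‖v‖ = 1 → ⟪v, ξ⟫_ℝ = 0 →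
      ∑ i, ∑ j, (v i : ℂ) * (w j : ℂ) * M ξ i j = 0 := by
    intro ξ v w hv hvξ
    set H : EuclideanSpace ℝ (Fin (m+1)) → ℝ :=
      fun x => ∑ i, ∑ j, (v i * w j) * f i j x with hH
    have hHint : Integrable H := by
      apply integrable_finset_sum
      intro i _
      apply integrable_finset_sum
      intro j _
      exact ((f i j).integrable).const_mul _
    have hline : ∀ x, (∫ t : ℝ, H (x + t • v)) = 0 := by
      intro x
      have : (fun t : ℝ => H (x + t • v))
          = fun t : ℝ => ∑ i, ∑ j, f i j (x + t • v) * v i * w j := by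
        funext t
        refine Finset.sum_congr rfl fun i _ => Finset.sum_congr rfl fun j _ => by ring
      rw [this]
      exact hxray' x v w hv
    have hslice := Rank1Aux.slice H hHint hv hvξ hline
    have hexp : (fun x => ((H x : ℝ) : ℂ))
        = fun x => ∑ i, ∑ j, ((v i * w j : ℝ) : ℂ) * g i j x := by
      funext x
      rw [hH, hg]
      push_cast
      rfl
    rw [hexp] at hslice
    rw [Rank1Aux.fourier_sum Finset.univ _
      (fun i _ => integrable_finset_sum _ (fun j _ => (hgint i j).const_mul _)) ξ] at hslice
    have hstep : ∀ i, 𝓕 (fun x => ∑ j, ((v i * w j : ℝ) : ℂ) * g i j x) ξ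
        = ∑ j, (v i : ℂ) * (w j : ℂ) * M ξ i j := by
      intro i
      rw [Rank1Aux.fourier_sum Finset.univ (fun j => fun x => ((v i * w j : ℝ) : ℂ) * g i j x)
        (fun j _ => (hgint i j).const_mul _) ξ]
      refine Finset.sum_congr rfl fun j _ => ?_
      rw [Rank1Aux.fourier_const_mul (g i j) _ ξ]
      rw [hM]
      push_cast
      ring
    rw [Finset.sum_congr rfl (fun i _ => hstep i)] at hslice
    exact hslice
  -- symmetry of the Fourier matrix
  have hMsymm : ∀ ξ i j, M ξ i j = M ξ j i := by
    intro ξ i j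
    have hgs : g i j = g j i := by
      funext x
      simp only [hg]
      rw [hsymm i j]
    show 𝓕 (g i j) ξ = 𝓕 (g j i) ξ
    rw [hgs]
  -- vanishing for nonzero frequencies
  have hMne : ∀ ξ : EuclideanSpace ℝ (Fin (m+1)), ξ ≠ 0 → ∀ i j, M ξ i j = 0 := by
    intro ξ hξ
    exact Rank1Aux.linalg (fun i j => M ξ i j) ξ hξ (fun i j => hMsymm ξ i j)
      (fun v w hv hvξ => hperpM ξ v w hv hvξ) (hquad ξ)
  -- vanishing everywhere, by continuity
  have hMcont : ∀ i j, Continuous (fun ξ => M ξ i j) := by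
    intro i j
    apply (Real.contDiff_fourier (N := 0) ?_).continuous
    intro k hk
    have hk0 : k = 0 := by exact_mod_cast Nat.le_zero.mp (by exact_mod_cast hk)
    subst hk0
    simpa using (hgint i j).norm
  have hM0 : ∀ ξ, ∀ i j, M ξ i j = 0 := by
    intro ξ i j
    haveI : Nontrivial (EuclideanSpace ℝ (Fin (m+1))) :=
      ⟨⟨0, EuclideanSpace.single 0 1, by
        intro h
        have := congrArg norm h
        simp at this⟩⟩
    have hd : Dense {ξ : EuclideanSpace ℝ (Fin (m+1)) | ξ ≠ 0} := by
      have := dense_compl_singleton (0 : EuclideanSpace ℝ (Fin (m+1)))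
      rwa [Set.compl_singleton_eq] at this
    have heq : (fun ξ => M ξ i j) = fun _ => (0:ℂ) :=
      Continuous.ext_on hd (hMcont i j) continuous_const (fun ξ hξ => hMne ξ hξ i j)
    exact congrFun heq ξ
  -- Fourier inversion
  intro i j
  have hFzero : 𝓕 (g i j) = fun _ => (0:ℂ) := funext fun ξ => hM0 ξ i j
  have hFint : Integrable (𝓕 (g i j)) := by
    rw [hFzero]; exact integrable_zero _ _ _
  have hinv := Continuous.fourierInv_fourier_eq
    (Complex.continuous_ofReal.comp (f i j).continuous) (hgint i j) hFint
  have hzero : ∀ x, g i j x = 0 := by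
    intro x
    have h1 : 𝓕⁻ (𝓕 (g i j)) x = g i j x := congrFun hinv x
    rw [hFzero] at h1
    rw [← h1, Real.fourierInv_eq]
    simp
  ext x
  have := hzero x
  rw [hg] at this
  simpa using this

end Rank1Aux
end

section
/- Let m ≥ 1 and let h be a Schwartz elastic (m−1)-tensor field on ℝⁿ. Define f = ε(D²h), the elastic symmetrization of the second derivative tensor (D²h)_{iji₁…i_{2(m−1)}} = ∂_i ∂_j h_{i₁…i_{2(m−1)}}. Then the elastic X-ray transform of f vanishes: for all x ∈ ℝⁿ, unit v, and q ∈ ℝv ∪ v⊥, ∫_ℝ ⟨f(x+tv), (v⊗q)^{⊗m}⟩ dt = 0. -/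
open scoped BigOperators
open MeasureTheory Filter SchwartzMap

noncomputable def SchwartzMap.pderivCLM_s12 (𝕜 : Type*) [RCLike 𝕜] [NormedSpace 𝕜 ℝ]
    [SMulCommClass ℝ 𝕜 ℝ] {E : Type*} [NormedAddCommGroup E] [NormedSpace ℝ E] (m : E) :
    SchwartzMap E ℝ →L[𝕜] SchwartzMap E ℝ :=
  LineDeriv.lineDerivOpCLM 𝕜 (SchwartzMap E ℝ) m

theorem SchwartzMap.pderivCLM_apply_s12 (𝕜 : Type*) [RCLike 𝕜] [NormedSpace 𝕜 ℝ]
    [SMulCommClass ℝ 𝕜 ℝ] {E : Type*} [NormedAddCommGroup E] [NormedSpace ℝ E] (m : E)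
    (f : SchwartzMap E ℝ) (x : E) : SchwartzMap.pderivCLM_s12 𝕜 m f x = fderiv ℝ f x m := rfl

section LineLemmas
set_option linter.unusedSectionVars false
variable {E : Type*} [NormedAddCommGroup E] [InnerProductSpace ℝ E]

lemma line_temperate (x v : E) : Function.HasTemperateGrowth (fun t : ℝ => x + t • v) := by
  apply Function.HasTemperateGrowth.of_fderiv (k := 1) (C := ‖x‖ + ‖v‖)
  · have : (fderiv ℝ (fun t : ℝ => x + t • v)) = fun _ : ℝ => (1 : ℝ →L[ℝ] ℝ).smulRight v := by
      funext t
      have h1 : HasFDerivAt (fun t : ℝ => x + t • v) ((1 : ℝ →L[ℝ] ℝ).smulRight v) t := by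
        simpa [ContinuousLinearMap.one_def] using ((hasFDerivAt_id t).smul_const v).const_add x
      exact h1.fderiv
    rw [this]
    exact Function.HasTemperateGrowth.const _
  · exact fun t => (differentiable_const x).add ((differentiable_id.smul_const v) )|>.differentiableAt
  · intro t
    calc ‖x + t • v‖ ≤ ‖x‖ + ‖t‖ * ‖v‖ := by
          simpa [norm_smul] using norm_add_le x (t • v)
      _ ≤ (‖x‖ + ‖v‖) * (1 + ‖t‖) ^ 1 := by
          have h1 : (0:ℝ) ≤ ‖x‖ := norm_nonneg _
          have h2 : (0:ℝ) ≤ ‖v‖ := norm_nonneg _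
          have h3 : (0:ℝ) ≤ ‖t‖ := norm_nonneg _
          nlinarith

/-- composition of a Schwartz function with a unit-speed line is Schwartz -/
noncomputable def lineComp (u : SchwartzMap E ℝ) (x v : E) (hv : ‖v‖ = 1) : SchwartzMap ℝ ℝ :=
  u.compCLM (𝕜 := ℝ) (line_temperate x v)
    ⟨1, 1 + ‖x‖, by
      intro t
      have : ‖t‖ = ‖(x + t • v) - x‖ := by simp [norm_smul, hv]
      rw [this]
      have h1 : ‖(x + t • v) - x‖ ≤ ‖x + t • v‖ + ‖x‖ := norm_sub_le _ _
      have h2 : (0:ℝ) ≤ ‖x + t • v‖ := norm_nonneg _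
      have h3 : (0:ℝ) ≤ ‖x‖ := norm_nonneg _
      calc ‖(x + t • v) - x‖ ≤ ‖x + t • v‖ + ‖x‖ := h1
        _ ≤ (1 + ‖x‖) * (1 + ‖x + t • v‖) ^ 1 := by nlinarith⟩

lemma lineComp_apply (u : SchwartzMap E ℝ) (x v : E) (hv : ‖v‖ = 1) (t : ℝ) :
    lineComp u x v hv t = u (x + t • v) := rfl

lemma integrable_lineComp (u : SchwartzMap E ℝ) (x v : E) (hv : ‖v‖ = 1) :
    Integrable (fun t : ℝ => u (x + t • v)) volume := by
  have := (lineComp u x v hv).integrable (μ := volume)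
  exact this

lemma integral_line_deriv (u : SchwartzMap E ℝ) (x v : E) (hv : ‖v‖ = 1) :
    (∫ t : ℝ, fderiv ℝ u (x + t • v) v) = 0 := by
  set w : SchwartzMap ℝ ℝ := lineComp u x v hv with hw
  set ψ : SchwartzMap ℝ ℝ := lineComp (SchwartzMap.pderivCLM_s12 ℝ v u) x v hv with hψ
  have hψa : ∀ t : ℝ, ψ t = fderiv ℝ u (x + t • v) v := fun t => rfl
  have hderiv : ∀ t : ℝ, HasDerivAt (fun s : ℝ => u (x + s • v)) (ψ t) t := by
    intro t
    have hg : HasDerivAt (fun s : ℝ => x + s • v) v t := by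
      simpa using ((hasDerivAt_id t).smul_const v).const_add x
    have := (u.differentiableAt (x := x + t • v)).hasFDerivAt.comp_hasDerivAt t hg
    rw [hψa]; exact this
  have hint : Integrable (fun t : ℝ => fderiv ℝ u (x + t • v) v) volume := by
    have := ψ.integrable (μ := volume)
    exact this
  have hTend : Tendsto (fun R : ℝ => ∫ t in (-R)..R, fderiv ℝ u (x + t • v) v)
      atTop (nhds (∫ t : ℝ, fderiv ℝ u (x + t • v) v)) :=
    intervalIntegral_tendsto_integral hint tendsto_neg_atTop_atBot tendsto_id
  have hEq : ∀ R : ℝ, (∫ t in (-R)..R, fderiv ℝ u (x + t • v) v) = w R - w (-R) := by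
    intro R
    have := intervalIntegral.integral_eq_sub_of_hasDerivAt (f := fun s : ℝ => u (x + s • v))
      (f' := fun t => fderiv ℝ u (x + t • v) v) (a := -R) (b := R)
      (fun t _ => by simpa [hψa] using hderiv t)
      hint.intervalIntegrable
    simpa [hw, lineComp_apply, neg_smul] using this
  have hwT : Tendsto w atTop (nhds 0) :=
    (zero_at_infty w).mono_left (by rw [cocompact_eq_atBot_atTop]; exact le_sup_right)
  have hwB : Tendsto w atBot (nhds 0) :=
    (zero_at_infty w).mono_left (by rw [cocompact_eq_atBot_atTop]; exact le_sup_left)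
  have h0 : Tendsto (fun R : ℝ => w R - w (-R)) atTop (nhds 0) := by
    simpa using hwT.sub (hwB.comp tendsto_neg_atTop_atBot)
  rw [funext hEq] at hTend
  exact tendsto_nhds_unique hTend h0

end LineLemmas

section EuclidLemmas
variable {n : ℕ}
local notation "E" => EuclideanSpace ℝ (Fin n)

lemma euclid_sum_single (v : E) : ∑ i, v i • EuclideanSpace.single i (1:ℝ) = v := by
  ext j
  rw [show ((∑ i, v i • EuclideanSpace.single i (1:ℝ)) j)
      = ∑ i, (v i • EuclideanSpace.single i (1:ℝ)) j by rw [WithLp.ofLp_sum, Finset.sum_apply]]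
  simp [EuclideanSpace.single_apply]

lemma schwartz_sum_apply {ι : Type*} (s : Finset ι) (F : ι → SchwartzMap E ℝ) (y : E) :
    (∑ T ∈ s, F T) y = ∑ T ∈ s, F T y := by
  have := congrFun (map_sum (FunLike.coeAddMonoidHom (F := SchwartzMap E ℝ) (α := E) (β := ℝ)) F s) y
  simp only [FunLike.coe_coeAddMonoidHom, Finset.sum_apply] at this
  exact this

lemma pderiv_comm (u : SchwartzMap E ℝ) (y a b : E) :
    SchwartzMap.pderivCLM_s12 ℝ a (SchwartzMap.pderivCLM_s12 ℝ b u) y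
      = SchwartzMap.pderivCLM_s12 ℝ b (SchwartzMap.pderivCLM_s12 ℝ a u) y := by
  have hsym : IsSymmSndFDerivAt ℝ u y :=
    ((u.smooth 2).contDiffAt).isSymmSndFDerivAt (by simp [minSmoothness])
  have hd : DifferentiableAt ℝ (fderiv ℝ u) y :=
    (((u.smooth 2).fderiv_right (m := 1) (by norm_cast)).differentiable (by norm_num)).differentiableAt
  have key : ∀ c d : E, SchwartzMap.pderivCLM_s12 ℝ c (SchwartzMap.pderivCLM_s12 ℝ d u) y
      = fderiv ℝ (fderiv ℝ u) y c d := by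
    intro c d
    rw [SchwartzMap.pderivCLM_apply_s12]
    have hcoe : ⇑(SchwartzMap.pderivCLM_s12 ℝ d u) = fun z => (fderiv ℝ u z) ((fun _ : E => d) z) :=
      funext fun z => SchwartzMap.pderivCLM_apply_s12 ℝ d u z
    rw [hcoe, fderiv_clm_apply hd (differentiableAt_const d)]
    simp
  rw [key, key, hsym a b]

lemma pderiv_dir_sum (u : SchwartzMap E ℝ) (q : E) :
    SchwartzMap.pderivCLM_s12 ℝ q u
      = ∑ j, q j • SchwartzMap.pderivCLM_s12 ℝ (EuclideanSpace.single j (1:ℝ)) u := by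
  ext z
  rw [schwartz_sum_apply]
  simp only [SchwartzMap.smul_apply, SchwartzMap.pderivCLM_apply_s12, smul_eq_mul]
  conv_lhs => rw [← euclid_sum_single q]
  rw [map_sum]
  simp

lemma contract_base (u : SchwartzMap E ℝ) (v q y : E) :
    ∑ p : Fin n × Fin n, v p.1 * q p.2 *
      SchwartzMap.pderivCLM_s12 ℝ (EuclideanSpace.single p.1 (1:ℝ))
        (SchwartzMap.pderivCLM_s12 ℝ (EuclideanSpace.single p.2 (1:ℝ)) u) y
    = SchwartzMap.pderivCLM_s12 ℝ v (SchwartzMap.pderivCLM_s12 ℝ q u) y := by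
  rw [SchwartzMap.pderivCLM_apply_s12]
  conv_rhs => rw [← euclid_sum_single v, map_sum]
  rw [Fintype.sum_prod_type]
  refine Finset.sum_congr rfl fun i _ => ?_
  rw [_root_.map_smul, smul_eq_mul]
  have : fderiv ℝ (⇑(SchwartzMap.pderivCLM_s12 ℝ q u)) y (EuclideanSpace.single i (1:ℝ))
      = SchwartzMap.pderivCLM_s12 ℝ (EuclideanSpace.single i (1:ℝ)) (SchwartzMap.pderivCLM_s12 ℝ q u) y :=
    rfl
  rw [this, pderiv_dir_sum u q, map_sum, schwartz_sum_apply, Finset.mul_sum]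
  refine Finset.sum_congr rfl fun j _ => ?_
  rw [_root_.map_smul, SchwartzMap.smul_apply, smul_eq_mul]
  ring

lemma contract_eq (u : SchwartzMap E ℝ) (v q y : E) (b : Bool) :
    ∑ p : Fin n × Fin n, (if b then v p.2 * q p.1 else v p.1 * q p.2) *
      SchwartzMap.pderivCLM_s12 ℝ (EuclideanSpace.single p.1 (1:ℝ))
        (SchwartzMap.pderivCLM_s12 ℝ (EuclideanSpace.single p.2 (1:ℝ)) u) y
    = SchwartzMap.pderivCLM_s12 ℝ v (SchwartzMap.pderivCLM_s12 ℝ q u) y := by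
  cases b
  · simpa using contract_base u v q y
  · rw [← contract_base u v q y]
    refine Fintype.sum_equiv (Equiv.prodComm (Fin n) (Fin n)) _ _ fun p => ?_
    simp only [Equiv.prodComm_apply, Prod.snd_swap, Prod.fst_swap, ite_true]
    rw [pderiv_comm]

/-- weight of one index pair, possibly swapped -/
def Wt (v q : EuclideanSpace ℝ (Fin n)) (b : Bool) (p : Fin n × Fin n) : ℝ :=
  if b then v p.2 * q p.1 else v p.1 * q p.2

lemma D_sum_apply (a b : E) {ι : Type*} (s : Finset ι) (c : ι → ℝ) (F : ι → SchwartzMap E ℝ)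
    (y : E) :
    SchwartzMap.pderivCLM_s12 ℝ a (SchwartzMap.pderivCLM_s12 ℝ b (∑ T ∈ s, c T • F T)) y
      = ∑ T ∈ s, c T * SchwartzMap.pderivCLM_s12 ℝ a (SchwartzMap.pderivCLM_s12 ℝ b (F T)) y := by
  rw [map_sum, map_sum, schwartz_sum_apply]
  refine Finset.sum_congr rfl fun T _ => ?_
  rw [_root_.map_smul, _root_.map_smul, SchwartzMap.smul_apply, smul_eq_mul]

end EuclidLemmas

/-- For `m = k+1 ≥ 1` and a Schwartz elastic `(m-1)`-tensor field `h`
(components indexed by `m-1` pairs of indices), the elastic X-ray transform of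
`f = ε(D²h)` (elastic symmetrization of the second derivative tensor, realized as the
average over permutations of the `m` index pairs and swaps within each pair) vanishes
for every point `x`, unit direction `v` and polarization `q ∈ ℝv ∪ v⊥`. -/
theorem hessian_in_kernel_all_ranks (n k : ℕ)
    (h : (Fin k → Fin n × Fin n) → SchwartzMap (EuclideanSpace ℝ (Fin n)) ℝ)
    (f : (Fin (k+1) → Fin n × Fin n) → EuclideanSpace ℝ (Fin n) → ℝ)
    (hf : f = fun I x =>
      (∑ π : Equiv.Perm (Fin (k+1)), ∑ s : Fin (k+1) → Bool,
        (fun J : Fin (k+1) → Fin n × Fin n =>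
          fderiv ℝ (fun y =>
              fderiv ℝ (h (fun r : Fin k => J r.succ)) y
                (EuclideanSpace.single (J 0).2 1)) x
            (EuclideanSpace.single (J 0).1 1))
        (fun r => if s r then ((I (π r)).2, (I (π r)).1) else I (π r)))
      / ((Nat.factorial (k+1) : ℝ) * 2 ^ (k+1)))
    (x v q : EuclideanSpace ℝ (Fin n)) (hv : ‖v‖ = 1)
    (hq : (∃ t : ℝ, q = t • v) ∨ inner ℝ q v = (0:ℝ)) :
    (∫ t : ℝ, ∑ I : Fin (k+1) → Fin n × Fin n,
      f I (x + t • v) * ∏ r, (v (I r).1 * q (I r).2)) = 0 := by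
  classical
  set H : (Fin (k+1) → Bool) → SchwartzMap (EuclideanSpace ℝ (Fin n)) ℝ :=
    fun s => ∑ T : Fin k → Fin n × Fin n, (∏ r : Fin k, Wt v q (s r.succ) (T r)) • h T with hH
  set ψ : (Fin (k+1) → Bool) → SchwartzMap (EuclideanSpace ℝ (Fin n)) ℝ :=
    fun s => SchwartzMap.pderivCLM_s12 ℝ v (SchwartzMap.pderivCLM_s12 ℝ q (H s)) with hψdef
  have hkey : ∀ y : EuclideanSpace ℝ (Fin n),
      (∑ I : Fin (k+1) → Fin n × Fin n, f I y * ∏ r, (v (I r).1 * q (I r).2))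
      = (∑ _π : Equiv.Perm (Fin (k+1)), ∑ s : Fin (k+1) → Bool, ψ s y)
        / ((Nat.factorial (k+1) : ℝ) * 2 ^ (k+1)) := by
    intro y
    have hstep : ∀ (π : Equiv.Perm (Fin (k+1))) (s : Fin (k+1) → Bool),
        (∑ I : Fin (k+1) → Fin n × Fin n,
          (fun J : Fin (k+1) → Fin n × Fin n =>
            fderiv ℝ (fun z =>
                fderiv ℝ (h (fun r : Fin k => J r.succ)) z
                  (EuclideanSpace.single (J 0).2 1)) y
              (EuclideanSpace.single (J 0).1 1))
            (fun r => if s r then ((I (π r)).2, (I (π r)).1) else I (π r))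
          * ∏ r, (v (I r).1 * q (I r).2))
        = ψ s y := by
      intro π s
      -- Step B: sum over all J of G J * ∏ Wt equals ψ s y
      have stepB : (∑ J : Fin (k+1) → Fin n × Fin n,
          (fderiv ℝ (fun z =>
              fderiv ℝ (h (fun r : Fin k => J r.succ)) z
                (EuclideanSpace.single (J 0).2 1)) y
            (EuclideanSpace.single (J 0).1 1))
          * ∏ r, Wt v q (s r) (J r)) = ψ s y := by
        have split := Fintype.sum_equiv
          (Fin.consEquiv (fun _ : Fin (k+1) => Fin n × Fin n))
          (fun pT : (Fin n × Fin n) × (Fin k → Fin n × Fin n) =>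
            Wt v q (s 0) pT.1 * ((∏ r : Fin k, Wt v q (s r.succ) (pT.2 r)) *
              SchwartzMap.pderivCLM_s12 ℝ (EuclideanSpace.single pT.1.1 1)
                (SchwartzMap.pderivCLM_s12 ℝ (EuclideanSpace.single pT.1.2 1) (h pT.2)) y))
          (fun J : Fin (k+1) → Fin n × Fin n =>
            (fderiv ℝ (fun z =>
                fderiv ℝ (h (fun r : Fin k => J r.succ)) z
                  (EuclideanSpace.single (J 0).2 1)) y
              (EuclideanSpace.single (J 0).1 1))
            * ∏ r, Wt v q (s r) (J r))
          (fun pT => by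
            simp only [Fin.consEquiv_apply, Fin.cons_zero, Fin.cons_succ]
            rw [Fin.prod_univ_succ]
            simp only [Fin.cons_zero, Fin.cons_succ]
            have hD : (fderiv ℝ (fun z =>
                fderiv ℝ (h pT.2) z (EuclideanSpace.single pT.1.2 1)) y
                (EuclideanSpace.single pT.1.1 1))
                = SchwartzMap.pderivCLM_s12 ℝ (EuclideanSpace.single pT.1.1 1)
                    (SchwartzMap.pderivCLM_s12 ℝ (EuclideanSpace.single pT.1.2 1) (h pT.2)) y := rfl
            rw [hD]
            ring)
        rw [← split, Fintype.sum_prod_type, hψdef]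
        simp only
        rw [← contract_eq (H s) v q y (s 0)]
        refine Finset.sum_congr rfl fun p _ => ?_
        rw [Finset.sum_congr rfl (fun T _ => rfl), ← Finset.mul_sum]
        have hWt : Wt v q (s 0) p = (if s 0 then v p.2 * q p.1 else v p.1 * q p.2) := rfl
        rw [hWt]
        congr 1
        rw [hH]
        simp only
        rw [D_sum_apply]
      rw [← stepB]
      -- Step A: reindex through permutation and swaps
      have hinv : Function.Involutive
          (fun (J : Fin (k+1) → Fin n × Fin n) =>
            fun r => if s r then ((J r).2, (J r).1) else J r) := by
        intro J; funext r; by_cases hb : s r <;> simp [hb]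
      refine Fintype.sum_equiv
        ((Equiv.arrowCongr π.symm (Equiv.refl (Fin n × Fin n))).trans hinv.toPerm) _ _
        fun I => ?_
      have hσI : ((Equiv.arrowCongr π.symm (Equiv.refl (Fin n × Fin n))).trans hinv.toPerm) I
          = fun r => if s r then ((I (π r)).2, (I (π r)).1) else I (π r) := rfl
      rw [hσI]
      congr 1
      rw [← Equiv.prod_comp π (fun r => v (I r).1 * q (I r).2)]
      refine Finset.prod_congr rfl fun r _ => ?_
      show v (I (π r)).1 * q (I (π r)).2 = Wt v q (s r) _
      by_cases hb : s r = true
      · rw [show Wt v q (s r) (if s r = true then ((I (π r)).2, (I (π r)).1) else I (π r))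
            = Wt v q (s r) ((I (π r)).2, (I (π r)).1) from by rw [if_pos hb], Wt, if_pos hb]
      · rw [show Wt v q (s r) (if s r = true then ((I (π r)).2, (I (π r)).1) else I (π r))
            = Wt v q (s r) (I (π r)) from by rw [if_neg hb], Wt, if_neg hb]
    rw [hf]
    simp only
    simp_rw [div_mul_eq_mul_div, ← Finset.sum_div]
    congr 1
    simp_rw [Finset.sum_mul]
    rw [Finset.sum_comm]
    refine Finset.sum_congr rfl fun π _ => ?_
    rw [Finset.sum_comm]
    exact Finset.sum_congr rfl fun s _ => hstep π s
  simp_rw [hkey]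
  rw [MeasureTheory.integral_div]
  have hint : ∀ s : Fin (k+1) → Bool,
      Integrable (fun t : ℝ => ψ s (x + t • v)) volume :=
    fun s => integrable_lineComp (ψ s) x v hv
  rw [MeasureTheory.integral_finset_sum _
    (fun π _ => integrable_finset_sum _ (fun s _ => hint s))]
  have hzero : ∀ s : Fin (k+1) → Bool, (∫ t : ℝ, ψ s (x + t • v)) = 0 := by
    intro s
    have := integral_line_deriv (SchwartzMap.pderivCLM_s12 ℝ q (H s)) x v hv
    simpa [hψdef, SchwartzMap.pderivCLM_apply_s12] using this
  have h2 : (∫ t : ℝ, ∑ s : Fin (k+1) → Bool, ψ s (x + t • v)) = 0 := by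
    rw [MeasureTheory.integral_finset_sum _ (fun s _ => hint s)]
    simp [hzero]
  rw [Finset.sum_eq_zero fun π _ => h2]
  simp
end
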